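/- arXiv:1301.7597 — 7 statements merged into one kernel-verified Lean document; each statement's English description precedes it below -/
import Mathlib

section
/- Let G be a graph, M a maximum matching of G, and S the set of vertices exposed by M. A vertex u belongs to D(G) (the set of vertices missed by some maximum matching) if and only if there exists v ∈ S such that there is an M-balanced path from u to v (i.e., an M-alternating path with an even number of edges starting at u in which M ∩ E(P) is a near-perfect matching of P exposing only v). -/
open SimpleGraph

variable {V : Type*}

/-- `M` is a matching of `G`, given as a set of edges. -/
def IsMatchingSet (G : SimpleGraph V) (M : Set (Sym2 V)) : Prop :=
  M ⊆ G.edgeSet ∧ ∀ (v : V), ∀ e ∈ M, ∀ f ∈ M, v ∈ e → v ∈ f → e = f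

/-- `M` is a perfect matching of `G`: every vertex lies on exactly one edge of `M`. -/
def IsPerfectMatchingSet (G : SimpleGraph V) (M : Set (Sym2 V)) : Prop :=
  M ⊆ G.edgeSet ∧ ∀ v : V, ∃! e, e ∈ M ∧ v ∈ e

/-- `M` is a maximum matching of `G`. -/
def IsMaximumMatchingSet (G : SimpleGraph V) (M : Set (Sym2 V)) : Prop :=
  IsMatchingSet G M ∧ ∀ M', IsMatchingSet G M' → M'.ncard ≤ M.ncard

/-- `v` is exposed by the matching `M`. -/
def ExposedBy (M : Set (Sym2 V)) (v : V) : Prop := ∀ e ∈ M, v ∉ e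

/-- The Gallai–Edmonds set `D(G)`: vertices missed by some maximum matching. -/
def Dset (G : SimpleGraph V) : Set V :=
  {v | ∃ M, IsMaximumMatchingSet G M ∧ ExposedBy M v}

/-- `A(G) = Γ_G(D(G))`, the neighbors of `D(G)` outside `D(G)`. -/
def Aset (G : SimpleGraph V) : Set V :=
  {v | v ∉ Dset G ∧ ∃ u ∈ Dset G, G.Adj u v}

/-- `C(G) = V(G) \ (D(G) ∪ A(G))`. -/
def Cset (G : SimpleGraph V) : Set V :=
  {v | v ∉ Dset G ∧ v ∉ Aset G}

/-- A graph is factorizable if it has a perfect matching. -/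
def Factorizable (G : SimpleGraph V) : Prop := ∃ M, IsPerfectMatchingSet G M

/-- A walk is `M`-alternating if its edges alternate between `M` and its complement. -/
def IsAltWalk {G : SimpleGraph V} {u v : V} (M : Set (Sym2 V)) (p : G.Walk u v) : Prop :=
  List.Chain' (fun e f => e ∈ M ↔ f ∉ M) p.edges

/-- An `M`-balanced path from `u` to `v`: an even `M`-alternating path whose matching
edges form a near-perfect matching of the path exposing only `v` (first edge is in `M`). -/
def IsBalancedPath {G : SimpleGraph V} {u v : V} (M : Set (Sym2 V)) (p : G.Walk u v) : Prop :=
  p.IsPath ∧ Even p.length ∧ IsAltWalk M p ∧ ∀ e, p.edges.head? = some e → e ∈ M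

/-- An `M`-saturated path: odd `M`-alternating, matching edges perfectly cover the path. -/
def IsSaturatedPath {G : SimpleGraph V} {u v : V} (M : Set (Sym2 V)) (p : G.Walk u v) : Prop :=
  p.IsPath ∧ Odd p.length ∧ IsAltWalk M p ∧ ∀ e, p.edges.head? = some e → e ∈ M

/-- An `M`-exposed path: odd `M`-alternating, non-matching edges perfectly cover the path. -/
def IsExposedPath {G : SimpleGraph V} {u v : V} (M : Set (Sym2 V)) (p : G.Walk u v) : Prop :=
  p.IsPath ∧ Odd p.length ∧ IsAltWalk M p ∧ ∀ e, p.edges.head? = some e → e ∉ M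

/-- The allowed edges of `G`: edges lying in some perfect matching. -/
def allowedEdges (G : SimpleGraph V) : Set (Sym2 V) :=
  {e | ∃ M, IsPerfectMatchingSet G M ∧ e ∈ M}

/-- `u` and `v` lie in the same factor-connected component of `G`. -/
def SameFC (G : SimpleGraph V) (u v : V) : Prop :=
  (SimpleGraph.fromEdgeSet (allowedEdges G)).Reachable u v

/-- `X` is separating: every factor-connected component lies inside `X` or misses `X`. -/
def IsSeparating (G : SimpleGraph V) (X : Set V) : Prop :=
  ∀ u v : V, SameFC G u v → (u ∈ X ↔ v ∈ X)

/-- A factorizable graph `G` is saturated if adding any non-edge strictly increases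
the number of perfect matchings. -/
def Saturated (G : SimpleGraph V) : Prop :=
  Factorizable G ∧ ∀ x y : V, x ≠ y → ¬ G.Adj x y →
    {N | IsPerfectMatchingSet G N}.ncard <
      {N | IsPerfectMatchingSet (G ⊔ SimpleGraph.fromEdgeSet {s(x, y)}) N}.ncard



section AuxiliaryLemmas

variable {G : SimpleGraph V} {M : Set (Sym2 V)}

lemma mem_support_of_mem_edges' {u v w : V} {p : G.Walk u v} {e : Sym2 V}
    (he : e ∈ p.edges) (hw : w ∈ e) : w ∈ p.support := by
  obtain ⟨c, rfl⟩ := Sym2.mem_iff_exists.mp hw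
  exact p.fst_mem_support_of_mem_edges he

lemma balanced_nil {u : V} : IsBalancedPath M (Walk.nil : G.Walk u u) :=
  ⟨Walk.IsPath.nil, by simp, by exact List.isChain_nil, by simp⟩

lemma balanced_destruct {u v : V} {p : G.Walk u v} (hp : IsBalancedPath M p)
    (hn : p.length ≠ 0) :
    ∃ (w1 w2 : V) (h1 : G.Adj u w1) (h2 : G.Adj w1 w2) (q : G.Walk w2 v),
      p = Walk.cons h1 (Walk.cons h2 q) ∧ IsBalancedPath M q ∧
      s(u, w1) ∈ M ∧ s(w1, w2) ∉ M ∧ u ∉ q.support ∧ w1 ∉ q.support ∧ u ≠ w1 := by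
  obtain ⟨hpath, heven, halt, hhead⟩ := hp
  cases p with
  | nil => simp at hn
  | @cons _ w1 _ h1 p' =>
    cases p' with
    | nil => simp [Nat.even_add_one] at heven
    | @cons _ w2 _ h2 q =>
      have he0 : s(u, w1) ∈ M := hhead _ (by simp)
      have halt2 : List.Chain' (fun e f => e ∈ M ↔ f ∉ M)
          (s(u, w1) :: s(w1, w2) :: q.edges) := by
        simpa only [IsAltWalk, Walk.edges_cons] using halt
      obtain ⟨hr01, halt'⟩ := List.isChain_cons_cons.mp halt2
      have he1 : s(w1, w2) ∉ M := hr01.mp he0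
      obtain ⟨hr1q, haltq⟩ := List.isChain_cons.mp halt'
      have hheadq : ∀ e, q.edges.head? = some e → e ∈ M := by
        intro e he
        by_contra hne
        exact he1 ((hr1q e he).mpr hne)
      rw [Walk.cons_isPath_iff] at hpath
      obtain ⟨hpath', hus⟩ := hpath
      rw [Walk.cons_isPath_iff] at hpath'
      obtain ⟨hq, hw1s⟩ := hpath'
      simp only [Walk.support_cons, List.mem_cons, not_or] at hus
      have hqeven : Even q.length := by
        simp only [Walk.length_cons] at heven
        rcases heven with ⟨k, hk⟩
        exact ⟨k - 1, by omega⟩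
      exact ⟨w1, w2, h1, h2, q, rfl, ⟨hq, hqeven, haltq, hheadq⟩, he0, he1,
        hus.2, hw1s, hus.1⟩

/-- In a balanced path, each vertex other than the final one lies in a matching edge
of the path. -/
lemma balanced_cover_M :
    ∀ (n : ℕ) {u v : V} (p : G.Walk u v), p.length = n → IsBalancedPath M p →
      ∀ w ∈ p.support, w ≠ v → ∃ g ∈ p.edges, g ∈ M ∧ w ∈ g := by
  intro n
  induction n using Nat.strong_induction_on with
  | _ n ih =>
    intro u v p hlen hp w hw hwv
    by_cases h0 : p.length = 0
    · have huv := p.eq_of_length_eq_zero h0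
      subst huv
      cases p with
      | nil =>
        simp only [Walk.support_nil, List.mem_cons, List.not_mem_nil, or_false] at hw
        exact absurd hw hwv
      | cons h q => simp at h0
    · obtain ⟨w1, w2, h1, h2, q, rfl, hq, he0, he1, hus, hw1s, huw1⟩ :=
        balanced_destruct hp h0
      have hql : q.length < n := by
        simp only [Walk.length_cons] at hlen; omega
      simp only [Walk.support_cons, List.mem_cons] at hw
      rcases hw with rfl | rfl | hwq
      · exact ⟨s(w, w1), by simp, he0, Sym2.mem_mk_left _ _⟩
      · exact ⟨s(u, w), by simp, he0, Sym2.mem_mk_right _ _⟩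
      · obtain ⟨g, hg, hgM, hwg⟩ := ih q.length hql q rfl hq w hwq hwv
        exact ⟨g, by simp only [Walk.edges_cons, List.mem_cons]; exact Or.inr (Or.inr hg),
          hgM, hwg⟩

/-- In a balanced path, each vertex other than the initial one lies in a non-matching
edge of the path. -/
lemma balanced_cover_nonM :
    ∀ (n : ℕ) {u v : V} (p : G.Walk u v), p.length = n → IsBalancedPath M p →
      ∀ w ∈ p.support, w ≠ u → ∃ g ∈ p.edges, g ∉ M ∧ w ∈ g := by
  intro n
  induction n using Nat.strong_induction_on with
  | _ n ih =>
    intro u v p hlen hp w hw hwu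
    by_cases h0 : p.length = 0
    · have huv := p.eq_of_length_eq_zero h0
      subst huv
      cases p with
      | nil =>
        simp only [Walk.support_nil, List.mem_cons, List.not_mem_nil, or_false] at hw
        exact absurd hw hwu
      | cons h q => simp at h0
    · obtain ⟨w1, w2, h1, h2, q, rfl, hq, he0, he1, hus, hw1s, huw1⟩ :=
        balanced_destruct hp h0
      have hql : q.length < n := by
        simp only [Walk.length_cons] at hlen; omega
      simp only [Walk.support_cons, List.mem_cons] at hw
      rcases hw with rfl | rfl | hwq
      · exact absurd rfl hwu
      · exact ⟨s(w, w2), by simp, he1, Sym2.mem_mk_left _ _⟩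
      · by_cases hww2 : w = w2
        · subst hww2
          exact ⟨s(w1, w), by simp, he1, Sym2.mem_mk_right _ _⟩
        · obtain ⟨g, hg, hgM, hwg⟩ := ih q.length hql q rfl hq w hwq hww2
          exact ⟨g, by simp only [Walk.edges_cons, List.mem_cons]; exact Or.inr (Or.inr hg),
            hgM, hwg⟩

/-- Toggling a balanced path whose far end is exposed produces a matching of the same
size exposing the near end. -/
lemma toggle_matching [Finite V] (hM : IsMatchingSet G M) :
    ∀ (n : ℕ) {u v : V} (p : G.Walk u v), p.length = n → IsBalancedPath M p →
      ExposedBy M v →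
      IsMatchingSet G ((M \ {g | g ∈ p.edges}) ∪ ({g | g ∈ p.edges} \ M)) ∧
      ((M \ {g | g ∈ p.edges}) ∪ ({g | g ∈ p.edges} \ M)).ncard = M.ncard ∧
      ExposedBy ((M \ {g | g ∈ p.edges}) ∪ ({g | g ∈ p.edges} \ M)) u := by
  intro n
  induction n using Nat.strong_induction_on with
  | _ n ih =>
    intro u v p hlen hp hv
    by_cases h0 : p.length = 0
    · have huv := p.eq_of_length_eq_zero h0
      subst huv
      have hE : {g | g ∈ p.edges} = (∅ : Set (Sym2 V)) := by
        cases p with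
        | nil => simp
        | cons h q => simp at h0
      rw [hE]
      simp only [Set.diff_empty, Set.empty_diff, Set.union_empty]
      exact ⟨hM, trivial, hv⟩
    · obtain ⟨w1, w2, h1, h2, q, rfl, hq, he0, he1, hus, hw1s, huw1⟩ :=
        balanced_destruct hp h0
      have hql : q.length < n := by
        simp only [Walk.length_cons] at hlen; omega
      obtain ⟨hm2, hc2, hx2⟩ := ih q.length hql q rfl hq hv
      set Dq : Set (Sym2 V) := {g | g ∈ q.edges} with hDq
      set M2 : Set (Sym2 V) := (M \ Dq) ∪ (Dq \ M) with hM2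
      have he0q : s(u, w1) ∉ Dq := fun h =>
        hus (mem_support_of_mem_edges' h (Sym2.mem_mk_left _ _))
      have he1q : s(w1, w2) ∉ Dq := fun h =>
        hw1s (mem_support_of_mem_edges' h (Sym2.mem_mk_left _ _))
      have he0M2 : s(u, w1) ∈ M2 := Or.inl ⟨he0, he0q⟩
      have he1M2 : s(w1, w2) ∉ M2 := by
        rintro (⟨h, -⟩ | ⟨h, -⟩)
        · exact he1 h
        · exact he1q h
      have huw2 : u ≠ w2 := fun h => hus (h ▸ q.start_mem_support)
      have hset : (M \ {g | g ∈ (Walk.cons h1 (Walk.cons h2 q)).edges}) ∪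
          ({g | g ∈ (Walk.cons h1 (Walk.cons h2 q)).edges} \ M) =
          insert s(w1, w2) (M2 \ {s(u, w1)}) := by
        ext g
        simp only [Walk.edges_cons, List.mem_cons, Set.mem_union, Set.mem_diff,
          Set.mem_setOf_eq, Set.mem_insert_iff, Set.mem_singleton_iff, hM2, hDq, not_or]
        constructor
        · rintro (⟨hgM, hg0, hg1, hgq⟩ | ⟨rfl | rfl | hgq, hgM⟩)
          · exact Or.inr ⟨Or.inl ⟨hgM, hgq⟩, hg0⟩
          · exact absurd he0 hgM
          · exact Or.inl rfl
          · exact Or.inr ⟨Or.inr ⟨hgq, hgM⟩, fun h => he0q (h ▸ hgq)⟩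
        · rintro (rfl | ⟨⟨hgM, hgq⟩ | ⟨hgq, hgM⟩, hg0⟩)
          · exact Or.inr ⟨Or.inr (Or.inl rfl), he1⟩
          · exact Or.inl ⟨hgM, hg0, fun h => he1 (h ▸ hgM), hgq⟩
          · exact Or.inr ⟨Or.inr (Or.inr hgq), hgM⟩
      rw [hset]
      have hside : ∀ (w : V) (h : Sym2 V), h ∈ M2 → h ≠ s(u, w1) →
          w ∈ s(w1, w2) → w ∈ h → False := by
        intro w h hh2 hhne hw1 hwh
        rcases Sym2.mem_iff.mp hw1 with rfl | rfl
        · rcases hh2 with ⟨hhM, -⟩ | ⟨hhq, -⟩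
          · exact hhne (hM.2 w h hhM (s(u, w)) he0 hwh (Sym2.mem_mk_right _ _))
          · exact hw1s (mem_support_of_mem_edges' hhq hwh)
        · exact hx2 h hh2 hwh
      refine ⟨⟨?_, ?_⟩, ?_, ?_⟩
      · rintro g (rfl | ⟨hg2, -⟩)
        · exact h2
        · rcases hg2 with ⟨hgM, -⟩ | ⟨hgq, -⟩
          · exact hM.1 hgM
          · exact q.edges_subset_edgeSet hgq
      · rintro w g (rfl | ⟨hg2, hgne⟩) h (rfl | ⟨hh2, hhne⟩) hwg hwh
        · rfl
        · exact (hside w h hh2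
            (fun hh => hhne (Set.mem_singleton_iff.mpr hh)) hwg hwh).elim
        · exact (hside w g hg2
            (fun hh => hgne (Set.mem_singleton_iff.mpr hh)) hwh hwg).elim
        · exact hm2.2 w g hg2 h hh2 hwg hwh
      · have hnotin : s(w1, w2) ∉ M2 \ {s(u, w1)} := fun h => he1M2 h.1
        rw [Set.ncard_insert_of_notMem hnotin (Set.toFinite _),
          Set.ncard_diff_singleton_of_mem he0M2]
        have hpos : 0 < M2.ncard := (Set.ncard_pos (Set.toFinite _)).mpr ⟨_, he0M2⟩
        omega
      · rintro g (rfl | ⟨hg2, hgne⟩) hug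
        · rcases Sym2.mem_iff.mp hug with rfl | rfl
          · exact huw1 rfl
          · exact huw2 rfl
        · rcases hg2 with ⟨hgM, -⟩ | ⟨hgq, -⟩
          · exact (fun hh => hgne (Set.mem_singleton_iff.mpr hh))
              (hM.2 u g hgM (s(u, w1)) he0 hug (Sym2.mem_mk_left _ _))
          · exact hus (mem_support_of_mem_edges' hgq hug)

/-- Main induction for the forward direction. -/
lemma exposed_to_balanced [Finite V] {G : SimpleGraph V} {M : Set (Sym2 V)}
    (hM : IsMaximumMatchingSet G M) :
    ∀ (n : ℕ) (N : Set (Sym2 V)), IsMaximumMatchingSet G N → (N \ M).ncard = n →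
      ∀ u, ExposedBy N u →
      ∃ v, ExposedBy M v ∧ ∃ p : G.Walk u v, IsBalancedPath M p ∧
        ∀ e ∈ p.edges, e ∉ M → e ∈ N := by
  intro n
  induction n using Nat.strong_induction_on with
  | _ n ih =>
    intro N hN hcard u hu
    by_cases hum : ExposedBy M u
    · refine ⟨u, hum, Walk.nil, balanced_nil, ?_⟩
      simp
    · unfold ExposedBy at hum
      push_neg at hum
      obtain ⟨e, heM, hue⟩ := hum
      obtain ⟨x, rfl⟩ := Sym2.mem_iff_exists.mp hue
      have hadj_ux : G.Adj u x := hM.1.1 heM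
      have hux : u ≠ x := hadj_ux.ne
      have heN : s(u, x) ∉ N := fun h => hu _ h (Sym2.mem_mk_left _ _)
      by_cases hxN : ExposedBy N x
      · exfalso
        have hmatch : IsMatchingSet G (insert s(u, x) N) := by
          constructor
          · rintro g (rfl | hgN)
            · exact hadj_ux
            · exact hN.1.1 hgN
          · rintro w g (rfl | hgN) h (rfl | hhN) hwg hwh
            · rfl
            · exfalso
              rcases Sym2.mem_iff.mp hwg with rfl | rfl
              · exact hu h hhN hwh
              · exact hxN h hhN hwh
            · exfalso
              rcases Sym2.mem_iff.mp hwh with rfl | rfl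
              · exact hu g hgN hwg
              · exact hxN g hgN hwg
            · exact hN.1.2 w g hgN h hhN hwg hwh
        have hle := hN.2 _ hmatch
        rw [Set.ncard_insert_of_notMem heN (Set.toFinite _)] at hle
        omega
      · unfold ExposedBy at hxN
        push_neg at hxN
        obtain ⟨f, hfN, hxf⟩ := hxN
        obtain ⟨y, rfl⟩ := Sym2.mem_iff_exists.mp hxf
        have hadj_xy : G.Adj x y := hN.1.1 hfN
        have hfM : s(x, y) ∉ M := by
          intro h
          have := hM.1.2 x (s(u, x)) heM (s(x, y)) h (Sym2.mem_mk_right _ _)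
            (Sym2.mem_mk_left _ _)
          exact hu _ hfN (this ▸ Sym2.mem_mk_left u x)
        have huy : u ≠ y := fun h => hu _ hfN (h ▸ Sym2.mem_mk_right x y)
        have henotin : s(u, x) ∉ N \ {s(x, y)} := fun h => heN h.1
        have hposN : 0 < N.ncard := (Set.ncard_pos (Set.toFinite _)).mpr ⟨_, hfN⟩
        have hc : (insert s(u, x) (N \ {s(x, y)})).ncard = N.ncard := by
          rw [Set.ncard_insert_of_notMem henotin (Set.toFinite _),
            Set.ncard_diff_singleton_of_mem hfN]
          omega
        have hN'match : IsMatchingSet G (insert s(u, x) (N \ {s(x, y)})) := by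
          constructor
          · rintro g (rfl | ⟨hgN, -⟩)
            · exact hadj_ux
            · exact hN.1.1 hgN
          · rintro w g (rfl | ⟨hgN, hgne⟩) h (rfl | ⟨hhN, hhne⟩) hwg hwh
            · rfl
            · exfalso
              rcases Sym2.mem_iff.mp hwg with rfl | rfl
              · exact hu h hhN hwh
              · exact (fun hh => hhne (Set.mem_singleton_iff.mpr hh))
                  (hN.1.2 w h hhN (s(w, y)) hfN hwh (Sym2.mem_mk_left _ _))
            · exfalso
              rcases Sym2.mem_iff.mp hwh with rfl | rfl
              · exact hu g hgN hwg
              · exact (fun hh => hgne (Set.mem_singleton_iff.mpr hh))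
                  (hN.1.2 w g hgN (s(w, y)) hfN hwg (Sym2.mem_mk_left _ _))
            · exact hN.1.2 w g hgN h hhN hwg hwh
        have hN'max : IsMaximumMatchingSet G (insert s(u, x) (N \ {s(x, y)})) :=
          ⟨hN'match, fun M'' h'' => (hN.2 M'' h'').trans (le_of_eq hc.symm)⟩
        have hN'y : ExposedBy (insert s(u, x) (N \ {s(x, y)})) y := by
          rintro g (rfl | ⟨hgN, hgne⟩) hyg
          · rcases Sym2.mem_iff.mp hyg with rfl | rfl
            · exact huy rfl
            · exact hadj_xy.ne rfl
          · exact (fun hh => hgne (Set.mem_singleton_iff.mpr hh))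
              (hN.1.2 y g hgN (s(x, y)) hfN hyg (Sym2.mem_mk_right _ _))
        have hNM : (insert s(u, x) (N \ {s(x, y)})) \ M = (N \ M) \ {s(x, y)} := by
          ext g
          simp only [Set.mem_diff, Set.mem_insert_iff, Set.mem_singleton_iff]
          constructor
          · rintro ⟨rfl | ⟨h1, h2⟩, h3⟩
            · exact absurd heM h3
            · exact ⟨⟨h1, h3⟩, h2⟩
          · rintro ⟨⟨h1, h3⟩, h2⟩
            exact ⟨Or.inr ⟨h1, h2⟩, h3⟩
        have hlt : ((insert s(u, x) (N \ {s(x, y)})) \ M).ncard < n := by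
          have hfNM : s(x, y) ∈ N \ M := ⟨hfN, hfM⟩
          rw [hNM, ← hcard, Set.ncard_diff_singleton_of_mem hfNM]
          have hpos : 0 < (N \ M).ncard :=
            (Set.ncard_pos (Set.toFinite _)).mpr ⟨_, hfNM⟩
          omega
        obtain ⟨v, hv, p, hbp, hinv⟩ := ih _ hlt _ hN'max rfl y hN'y
        have hinvN : ∀ g ∈ p.edges, g ∉ M → g ∈ N := by
          intro g hg hgM
          rcases hinv g hg hgM with rfl | ⟨hgN, -⟩
          · exact absurd heM hgM
          · exact hgN
        have hup : u ∉ p.support := by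
          intro h
          obtain ⟨g, hgp, hgM, hug⟩ := balanced_cover_nonM p.length p rfl hbp u h huy
          exact hu g (hinvN g hgp hgM) hug
        have hxv : x ≠ v := fun h => hv (s(u, x)) heM (h ▸ Sym2.mem_mk_right u x)
        have hxp : x ∉ p.support := by
          intro h
          obtain ⟨g, hgp, hgM', hxg⟩ := balanced_cover_M p.length p rfl hbp x h hxv
          have hge : g = s(u, x) :=
            hM.1.2 x g hgM' (s(u, x)) heM hxg (Sym2.mem_mk_right u x)
          exact hup (mem_support_of_mem_edges' (hge ▸ hgp) (Sym2.mem_mk_left u x))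
        refine ⟨v, hv, Walk.cons hadj_ux (Walk.cons hadj_xy p), ⟨?_, ?_, ?_, ?_⟩, ?_⟩
        · rw [Walk.cons_isPath_iff, Walk.cons_isPath_iff]
          refine ⟨⟨hbp.1, hxp⟩, ?_⟩
          simp only [Walk.support_cons, List.mem_cons, not_or]
          exact ⟨hux, hup⟩
        · simp only [Walk.length_cons]
          rcases hbp.2.1 with ⟨k, hk⟩
          exact ⟨k + 1, by omega⟩
        · simp only [IsAltWalk, Walk.edges_cons]
          refine List.isChain_cons_cons.mpr ⟨iff_of_true heM hfM, ?_⟩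
          refine List.isChain_cons.mpr ⟨?_, hbp.2.2.1⟩
          intro c hc
          have hcM := hbp.2.2.2 c (Option.mem_def.mp hc)
          exact iff_of_false hfM (not_not_intro hcM)
        · intro g hg
          simp only [Walk.edges_cons, List.head?_cons, Option.some.injEq] at hg
          exact hg ▸ heM
        · intro g hg hgM
          simp only [Walk.edges_cons, List.mem_cons] at hg
          rcases hg with rfl | rfl | hg
          · exact absurd heM hgM
          · exact hfN
          · exact hinvN g hg hgM

end AuxiliaryLemmas

theorem stmt0 [Finite V] (G : SimpleGraph V) (M : Set (Sym2 V))
    (hM : IsMaximumMatchingSet G M) (u : V) :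
    u ∈ Dset G ↔
      ∃ v : V, ExposedBy M v ∧ ∃ p : G.Walk u v, IsBalancedPath M p := by
  constructor
  · intro h
    obtain ⟨N, hN, hu⟩ := h
    obtain ⟨v, hv, p, hbp, -⟩ := exposed_to_balanced hM ((N \ M).ncard) N hN rfl u hu
    exact ⟨v, hv, p, hbp⟩
  · rintro ⟨v, hv, p, hbp⟩
    obtain ⟨hm', hc', he'⟩ := toggle_matching hM.1 p.length p rfl hbp hv
    exact ⟨_, ⟨hm', fun M'' h'' => (hM.2 M'' h'').trans (le_of_eq hc'.symm)⟩, he'⟩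
end

section
/- Let G be a graph, M a maximum matching of G, and S the set of exposed vertices. A vertex u belongs to A(G) := Γ_G(D(G)) \ D(G) if and only if there is no M-balanced path from u to any vertex of S, while there exists v ∈ S such that there is an M-exposed path between u and v (an M-alternating path with an odd number of edges whose non-matching edges form a perfect matching of the path). -/
open SimpleGraph

variable {V : Type*}

lemma path_internal_two_edges {G : SimpleGraph V} :
    ∀ {a b : V} (q : G.Walk a b), q.IsPath → ∀ y ∈ q.support, y ≠ a → y ≠ b →
      ∃ g₁ ∈ q.edges, ∃ g₂ ∈ q.edges, g₁ ≠ g₂ ∧ y ∈ g₁ ∧ y ∈ g₂ := by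
  intro a b q
  induction q with
  | nil =>
    intro _ y hy hya _
    simp only [SimpleGraph.Walk.support_nil, List.mem_singleton] at hy
    exact absurd hy hya
  | @cons a c b h q ih =>
    intro hp y hy hya hyb
    rw [SimpleGraph.Walk.cons_isPath_iff] at hp
    rw [SimpleGraph.Walk.support_cons, List.mem_cons] at hy
    rcases hy with rfl | hy
    · exact absurd rfl hya
    by_cases hyc : y = c
    · subst hyc
      cases q with
      | nil => exact absurd rfl hyb
      | @cons c d b h' r =>
        refine ⟨s(a, y), by simp, s(y, d), by simp, ?_, by simp, by simp⟩
        intro heq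
        rw [Sym2.eq_iff] at heq
        rcases heq with ⟨rfl, _⟩ | ⟨rfl, _⟩
        · exact h.ne rfl
        · exact hp.2 (by simp [SimpleGraph.Walk.support_cons])
    · obtain ⟨g₁, hg₁, g₂, hg₂, hne, h1, h2⟩ := ih hp.1 y hy hyc hyb
      exact ⟨g₁, by simp [hg₁], g₂, by simp [hg₂], hne, h1, h2⟩

lemma alt_suffix {G : SimpleGraph V} (M : Set (Sym2 V)) :
    ∀ {d v : V} (q : G.Walk d v), q.IsPath → IsAltWalk M q →
      (∀ e, q.edges.head? = some e → (e ∈ M ↔ Even q.length)) →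
      ∀ u ∈ q.support, ∃ p : G.Walk u v, p.IsPath ∧ IsAltWalk M p ∧
        (∀ e, p.edges.head? = some e → (e ∈ M ↔ Even p.length)) := by
  intro d v q
  induction q with
  | nil =>
    intro _ _ _ u hu
    simp only [Walk.support_nil, List.mem_singleton] at hu
    subst hu
    exact ⟨Walk.nil, Walk.IsPath.nil, List.isChain_nil, by simp⟩
  | @cons d c v h q ih =>
    intro hp halt hT u hu
    rw [Walk.support_cons, List.mem_cons] at hu
    rcases hu with rfl | hu
    · exact ⟨Walk.cons h q, hp, halt, hT⟩
    · have hp' := hp.of_cons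
      have halt' : IsAltWalk M q := by
        have := (halt : List.Chain' _ (s(d,c) :: q.edges)).tail
        exact this
      have hT' : ∀ e, q.edges.head? = some e → (e ∈ M ↔ Even q.length) := by
        intro e he
        have hrel := (List.isChain_cons.mp (by simpa [IsAltWalk, Walk.edges_cons, List.Chain'] using halt)).1 e he
        have h1 := hT s(d,c) (by simp)
        have h2 : Even ((Walk.cons h q).length) ↔ ¬ Even q.length := by
          simp [Walk.length_cons, Nat.even_add_one]
        tauto
      exact ih hp' halt' hT' u hu

lemma flip_matching [Finite V] {G : SimpleGraph V} {M : Set (Sym2 V)}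
    (hMm : IsMatchingSet G M) :
    ∀ (n : ℕ) ⦃u v : V⦄ (p : G.Walk u v), IsBalancedPath M p → ExposedBy M v →
      p.length = n →
      ∃ M', IsMatchingSet G M' ∧ M'.ncard = M.ncard ∧ ExposedBy M' u ∧
        ∀ e, e ∉ p.edges → (e ∈ M' ↔ e ∈ M) := by
  intro n
  induction n using Nat.strong_induction_on with
  | _ n ih =>
    intro u v p hb hv hn
    cases p with
    | nil => exact ⟨M, hMm, rfl, hv, fun e _ => Iff.rfl⟩
    | @cons u w v h q =>
      cases q with
      | nil =>
        exfalso
        have := hb.2.1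
        simp [Walk.length_cons] at this
      | @cons w x v h' r =>
        obtain ⟨hpath, heven, halt, hhead⟩ := hb
        -- unpack path
        rw [Walk.cons_isPath_iff] at hpath
        obtain ⟨hpath1, hu_supp⟩ := hpath
        rw [Walk.cons_isPath_iff] at hpath1
        obtain ⟨hrpath, hw_supp⟩ := hpath1
        have hu_ne_w : u ≠ w := h.ne
        have hu_r : u ∉ r.support := by
          intro hc; exact hu_supp (by simp [Walk.support_cons, hc])
        have hu_ne_x : u ≠ x := by
          intro hc; exact hu_r (hc ▸ r.start_mem_support)
        -- first edges
        have he0 : s(u, w) ∈ M := hhead _ (by simp)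
        have haltl : List.Chain' (fun e f => e ∈ M ↔ f ∉ M) (s(u,w) :: s(w,x) :: r.edges) := by
          simpa [IsAltWalk] using halt
        unfold List.Chain' at haltl; rw [List.isChain_cons_cons] at haltl
        have he1 : s(w, x) ∉ M := haltl.1.mp he0
        have haltr := List.isChain_cons.mp haltl.2
        -- r is balanced
        have hrbal : IsBalancedPath M r := by
          refine ⟨hrpath, ?_, haltr.2, ?_⟩
          · have : Even (r.length + 1 + 1) := by simpa [Walk.length_cons] using heven
            simpa [Nat.even_add_one, not_not] using this
          · intro e he
            have := haltr.1 e he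
            tauto
        obtain ⟨M'', hM''m, hM''card, hM''exp, hM''diff⟩ :=
          ih r.length (by simp [Walk.length_cons] at hn; omega) r hrbal hv rfl
        -- s(u,w) ∈ M''
        have huw_not_r : s(u, w) ∉ r.edges := fun hc => hu_r (r.fst_mem_support_of_mem_edges hc)
        have huwM'' : s(u, w) ∈ M'' := (hM''diff _ huw_not_r).mpr he0
        have hwxM'' : s(w, x) ∉ M'' := fun hc => hM''exp _ hc (by simp)
        refine ⟨insert s(w, x) (M'' \ {s(u, w)}), ?_, ?_, ?_, ?_⟩
        · constructor
          · intro e he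
            rcases he with rfl | ⟨he, _⟩
            · rw [SimpleGraph.mem_edgeSet]; exact h'
            · exact hM''m.1 he
          · intro y e he f hf hye hyf
            rcases he with rfl | ⟨he, hne⟩ <;> rcases hf with rfl | ⟨hf, hnf⟩
            · rfl
            · exfalso
              rcases Sym2.mem_iff.mp hye with hyw | hyx
              · exact hnf (hM''m.2 y f hf s(u,w) huwM'' hyf (by simp [hyw]))
              · exact hM''exp f hf (hyx ▸ hyf)
            · exfalso
              rcases Sym2.mem_iff.mp hyf with hyw | hyx
              · exact hne (hM''m.2 y e he s(u,w) huwM'' hye (by simp [hyw]))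
              · exact hM''exp e he (hyx ▸ hye)
            · exact hM''m.2 y e he f hf hye hyf
        · have h1 : (M'' \ {s(u,w)}).ncard + 1 = M''.ncard :=
            Set.ncard_diff_singleton_add_one huwM'' (Set.toFinite _)
          have h2 : (insert s(w,x) (M'' \ {s(u,w)})).ncard = (M'' \ {s(u,w)}).ncard + 1 :=
            Set.ncard_insert_of_notMem (fun hc => hwxM'' hc.1) (Set.toFinite _)
          omega
        · intro e he hue
          rcases he with rfl | ⟨he, hne⟩
          · rcases Sym2.mem_iff.mp hue with rfl | rfl
            · exact hu_ne_w rfl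
            · exact hu_ne_x rfl
          · exact hne (hM''m.2 u e he s(u,w) huwM'' hue (by simp))
        · intro e hep
          have h1 : e ≠ s(u,w) := fun hc => hep (by simp [hc])
          have h2 : e ≠ s(w,x) := fun hc => hep (by simp [hc])
          have h3 : e ∉ r.edges := fun hc => hep (by simp [hc])
          simp only [Set.mem_insert_iff, Set.mem_diff, Set.mem_singleton_iff]
          rw [hM''diff e h3]
          tauto

lemma exists_balanced [Finite V] {G : SimpleGraph V} {M : Set (Sym2 V)}
    (hM : IsMaximumMatchingSet G M) :
    ∀ (n : ℕ) (N : Set (Sym2 V)) (u : V), IsMatchingSet G N → N.ncard = M.ncard →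
      ExposedBy N u → (M \ N).ncard = n →
      ∃ v, ExposedBy M v ∧ ∃ p : G.Walk u v, IsBalancedPath M p ∧
        ∀ e ∈ p.edges, e ∈ M ∨ e ∈ N := by
  intro n
  induction n using Nat.strong_induction_on with
  | _ n ih =>
    intro N u hN hNcard hNu hn
    by_cases hu : ∃ e ∈ M, u ∈ e
    swap
    · -- u is M-exposed: the nil walk works
      push_neg at hu
      exact ⟨u, hu, Walk.nil, ⟨Walk.IsPath.nil, Even.zero, List.isChain_nil, by simp⟩, by simp⟩
    obtain ⟨e, heM, hue⟩ := hu
    obtain ⟨w, rfl⟩ := Sym2.mem_iff_exists.mp hue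
    have hadj_uw : G.Adj u w := hM.1.1 heM
    have hu_ne_w : u ≠ w := hadj_uw.ne
    -- w must be N-matched, else we could augment
    have hw : ∃ f ∈ N, w ∈ f := by
      by_contra hw
      push_neg at hw
      have huwN : s(u, w) ∉ N := fun hc => hNu _ hc (by simp)
      have hNmat : IsMatchingSet G (insert s(u, w) N) := by
        constructor
        · intro g hg
          rcases hg with rfl | hg
          · rw [SimpleGraph.mem_edgeSet]; exact hadj_uw
          · exact hN.1 hg
        · intro y g hg f hf hyg hyf
          rcases hg with rfl | hg <;> rcases hf with rfl | hf
          · rfl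
          · exfalso
            rcases Sym2.mem_iff.mp hyg with rfl | rfl
            · exact hNu f hf hyf
            · exact hw f hf hyf
          · exfalso
            rcases Sym2.mem_iff.mp hyf with rfl | rfl
            · exact hNu g hg hyg
            · exact hw g hg hyg
          · exact hN.2 y g hg f hf hyg hyf
      have hcard : (insert s(u,w) N).ncard = N.ncard + 1 :=
        Set.ncard_insert_of_notMem huwN (Set.toFinite _)
      have := hM.2 _ hNmat
      omega
    obtain ⟨f, hfN, hwf⟩ := hw
    obtain ⟨x, rfl⟩ := Sym2.mem_iff_exists.mp hwf
    have hadj_wx : G.Adj w x := hN.1 hfN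
    have hw_ne_x : w ≠ x := hadj_wx.ne
    have hx_ne_u : x ≠ u := by
      rintro rfl
      exact hNu _ hfN (by simp)
    have hwxM : s(w, x) ∉ M := by
      intro hc
      have : s(u, w) = s(w, x) := hM.1.2 w _ heM _ hc (by simp) (by simp)
      rw [Sym2.eq_iff] at this
      rcases this with ⟨rfl, rfl⟩ | ⟨h1, _⟩
      · exact hu_ne_w rfl
      · exact hx_ne_u h1.symm
    have huwN : s(u, w) ∉ N := fun hc => hNu _ hc (by simp)
    -- the swapped matching
    set N' : Set (Sym2 V) := insert s(u, w) (N \ {s(w, x)}) with hN'def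
    have hN'mat : IsMatchingSet G N' := by
      constructor
      · intro g hg
        rcases hg with rfl | ⟨hg, _⟩
        · rw [SimpleGraph.mem_edgeSet]; exact hadj_uw
        · exact hN.1 hg
      · intro y g hg f hf hyg hyf
        rcases hg with rfl | ⟨hg, hgne⟩ <;> rcases hf with rfl | ⟨hf, hfne⟩
        · rfl
        · exfalso
          rcases Sym2.mem_iff.mp hyg with h1 | h1
          · exact hNu f hf (h1 ▸ hyf)
          · exact hfne (hN.2 y f hf s(w,x) hfN hyf (by simp [h1]))
        · exfalso
          rcases Sym2.mem_iff.mp hyf with h1 | h1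
          · exact hNu g hg (h1 ▸ hyg)
          · exact hgne (hN.2 y g hg s(w,x) hfN hyg (by simp [h1]))
        · exact hN.2 y g hg f hf hyg hyf
    have hN'card : N'.ncard = M.ncard := by
      have h1 : (N \ {s(w,x)}).ncard + 1 = N.ncard :=
        Set.ncard_diff_singleton_add_one hfN (Set.toFinite _)
      have h2 : N'.ncard = (N \ {s(w,x)}).ncard + 1 :=
        Set.ncard_insert_of_notMem (fun hc => huwN hc.1) (Set.toFinite _)
      omega
    have hN'exp : ExposedBy N' x := by
      intro g hg hxg
      rcases hg with rfl | ⟨hg, hgne⟩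
      · rcases Sym2.mem_iff.mp hxg with h1 | h1
        · exact hx_ne_u h1
        · exact hw_ne_x h1.symm
      · exact hgne (hN.2 x g hg s(w,x) hfN hxg (by simp))
    have hdiff : M \ N' = (M \ N) \ {s(u, w)} := by
      ext g
      constructor
      · rintro ⟨hgM, hg⟩
        simp only [hN'def, Set.mem_insert_iff, Set.mem_diff, Set.mem_singleton_iff, not_or,
          not_and, not_not] at hg
        exact ⟨⟨hgM, fun hgN => hwxM ((hg.2 hgN) ▸ hgM)⟩, hg.1⟩
      · rintro ⟨⟨hgM, hgN⟩, hgne⟩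
        refine ⟨hgM, ?_⟩
        simp only [hN'def, Set.mem_insert_iff, Set.mem_diff, Set.mem_singleton_iff, not_or]
        exact ⟨hgne, fun h => hgN h.1⟩
    have huwMN : s(u, w) ∈ M \ N := ⟨heM, huwN⟩
    have hmeas : (M \ N').ncard + 1 = n := by
      rw [hdiff, ← hn]
      exact Set.ncard_diff_singleton_add_one huwMN (Set.toFinite _)
    obtain ⟨v, hvexp, q, hqbal, hqsub⟩ :=
      ih ((M \ N').ncard) (by omega) N' x hN'mat hN'card hN'exp rfl
    -- w is not on q
    have hq_edge_w : ∀ g ∈ q.edges, w ∈ g → g = s(u, w) := by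
      intro g hg hwg
      rcases hqsub g hg with hgM | hgN'
      · exact hM.1.2 w g hgM s(u,w) heM hwg (by simp)
      · rcases hgN' with rfl | ⟨hgN, hgne⟩
        · rfl
        · exact absurd (hN.2 w g hgN s(w,x) hfN hwg (by simp)) hgne
    have hw_supp : w ∉ q.support := by
      intro hws
      have hw_ne_x' : w ≠ x := hw_ne_x
      have hw_ne_v : w ≠ v := by
        rintro rfl
        exact hvexp _ heM (by simp)
      obtain ⟨g₁, hg₁, g₂, hg₂, hne, h1, h2⟩ :=
        path_internal_two_edges q hqbal.1 w hws hw_ne_x' hw_ne_v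
      exact hne ((hq_edge_w g₁ hg₁ h1).trans (hq_edge_w g₂ hg₂ h2).symm)
    have huw_q : s(u, w) ∉ q.edges := fun hc => hw_supp (q.snd_mem_support_of_mem_edges hc)
    have hu_supp : u ∉ q.support := by
      intro hus
      have hu_ne_x' : u ≠ x := fun hc => hx_ne_u hc.symm
      have hu_ne_v : u ≠ v := by
        rintro rfl
        exact hvexp _ heM (by simp)
      obtain ⟨g₁, hg₁, _, _, _, h1, _⟩ :=
        path_internal_two_edges q hqbal.1 u hus hu_ne_x' hu_ne_v
      rcases hqsub g₁ hg₁ with hgM | hgN'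
      · exact huw_q ((hM.1.2 u g₁ hgM s(u,w) heM h1 (by simp)) ▸ hg₁)
      · rcases hgN' with rfl | ⟨hgN, _⟩
        · exact huw_q hg₁
        · exact hNu g₁ hgN h1
    -- assemble the path
    refine ⟨v, hvexp, Walk.cons hadj_uw (Walk.cons hadj_wx q), ⟨?_, ?_, ?_, ?_⟩, ?_⟩
    · rw [Walk.cons_isPath_iff, Walk.cons_isPath_iff]
      refine ⟨⟨hqbal.1, hw_supp⟩, ?_⟩
      rw [Walk.support_cons, List.mem_cons]
      push_neg
      exact ⟨hu_ne_w, hu_supp⟩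
    · simp only [Walk.length_cons]
      simpa [Nat.even_add_one, not_not] using hqbal.2.1
    · show List.Chain' _ (s(u,w) :: s(w,x) :: q.edges)
      unfold List.Chain'; rw [List.isChain_cons_cons, List.isChain_cons]
      refine ⟨iff_of_true heM hwxM, ?_, hqbal.2.2.1⟩
      intro c hc
      exact iff_of_false hwxM (not_not.mpr (hqbal.2.2.2 c hc))
    · intro g hg
      simp only [Walk.edges_cons, List.head?_cons, Option.some_inj] at hg
      exact hg ▸ heM
    · intro g hg
      simp only [Walk.edges_cons, List.mem_cons] at hg
      rcases hg with rfl | rfl | hg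
      · exact Or.inl heM
      · exact Or.inr hfN
      · rcases hqsub g hg with hgM | hgN'
        · exact Or.inl hgM
        · rcases hgN' with rfl | ⟨hgN, _⟩
          · exact Or.inl heM
          · exact Or.inr hgN

lemma mem_Dset_iff [Finite V] {G : SimpleGraph V} {M : Set (Sym2 V)}
    (hM : IsMaximumMatchingSet G M) (u : V) :
    u ∈ Dset G ↔ ∃ v, ExposedBy M v ∧ ∃ p : G.Walk u v, IsBalancedPath M p := by
  constructor
  · rintro ⟨N, hNmax, hNu⟩
    have hcard : N.ncard = M.ncard := le_antisymm (hM.2 N hNmax.1) (hNmax.2 M hM.1)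
    obtain ⟨v, hv, p, hp, -⟩ := exists_balanced hM _ N u hNmax.1 hcard hNu rfl
    exact ⟨v, hv, p, hp⟩
  · rintro ⟨v, hv, p, hp⟩
    obtain ⟨M', hm, hc, he, -⟩ := flip_matching hM.1 p.length p hp hv rfl
    exact ⟨M', ⟨hm, fun N hN => (hM.2 N hN).trans_eq hc.symm⟩, he⟩

theorem stmt1 [Finite V] (G : SimpleGraph V) (M : Set (Sym2 V))
    (hM : IsMaximumMatchingSet G M) (u : V) :
    u ∈ Aset G ↔
      (∀ v : V, ExposedBy M v → ∀ p : G.Walk u v, ¬ IsBalancedPath M p) ∧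
        ∃ v : V, ExposedBy M v ∧ ∃ p : G.Walk u v, IsExposedPath M p := by
  have hMm := hM.1
  constructor
  · rintro ⟨hnD, d, hdD, hadj⟩
    constructor
    · intro v hv p hp
      exact hnD ((mem_Dset_iff hM u).mpr ⟨v, hv, p, hp⟩)
    · obtain ⟨v, hvexp, q, hqbal⟩ := (mem_Dset_iff hM d).mp hdD
      by_cases hus : u ∈ q.support
      · have hT : ∀ e, q.edges.head? = some e → (e ∈ M ↔ Even q.length) := fun e he =>
          iff_of_true (hqbal.2.2.2 e he) hqbal.2.1
        obtain ⟨p, hppath, hpalt, hpT⟩ := alt_suffix M q hqbal.1 hqbal.2.2.1 hT u hus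
        by_cases hev : Even p.length
        · exact absurd ((mem_Dset_iff hM u).mpr ⟨v, hvexp, p, hppath, hev, hpalt,
            fun e he => (hpT e he).mpr hev⟩) hnD
        · exact ⟨v, hvexp, p, hppath, Nat.not_even_iff_odd.mp hev, hpalt,
            fun e he hem => hev ((hpT e he).mp hem)⟩
      · have hnM : s(u, d) ∉ M := by
          intro hmem
          cases q with
          | nil => exact hvexp _ hmem (by simp)
          | @cons d c v h' r =>
            have hfirst : s(d, c) ∈ M := hqbal.2.2.2 _ (by simp)
            have heq : s(u, d) = s(d, c) := hMm.2 d _ hmem _ hfirst (by simp) (by simp)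
            rw [Sym2.eq_iff] at heq
            rcases heq with ⟨rfl, -⟩ | ⟨rfl, -⟩
            · exact hadj.ne rfl
            · refine hus ?_
              rw [Walk.support_cons]
              exact List.mem_cons_of_mem _ r.start_mem_support
        refine ⟨v, hvexp, Walk.cons hadj.symm q, ?_, ?_, ?_, ?_⟩
        · rw [Walk.cons_isPath_iff]; exact ⟨hqbal.1, hus⟩
        · rw [Walk.length_cons]; exact hqbal.2.1.add_one
        · show List.Chain' _ (s(u, d) :: q.edges)
          unfold List.Chain'; rw [List.isChain_cons]
          exact ⟨fun c hc => iff_of_false hnM (not_not.mpr (hqbal.2.2.2 c hc)), hqbal.2.2.1⟩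
        · intro e he
          simp only [Walk.edges_cons, List.head?_cons, Option.some_inj] at he
          exact he ▸ hnM
  · rintro ⟨h1, v, hv, p, hpexp⟩
    have hnD : u ∉ Dset G := fun hD => by
      obtain ⟨v', hv', p', hp'⟩ := (mem_Dset_iff hM u).mp hD
      exact h1 v' hv' p' hp'
    cases p with
    | nil => exact absurd hpexp.2.1 (by simp [Nat.odd_iff])
    | @cons u w v h q =>
      obtain ⟨hpath, hodd, halt, hhead⟩ := hpexp
      have hfirst : s(u, w) ∉ M := hhead _ (by simp)
      have haltl : List.Chain' (fun e f => e ∈ M ↔ f ∉ M) (s(u, w) :: q.edges) := by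
        simpa [IsAltWalk] using halt
      have hqbal : IsBalancedPath M q := by
        refine ⟨hpath.of_cons, ?_, ?_, ?_⟩
        · have hodd' : Odd (q.length + 1) := by simpa [Walk.length_cons] using hodd
          simpa [Nat.odd_add_one] using hodd'
        · exact haltl.tail
        · intro e he
          have := (List.isChain_cons.mp haltl).1 e he
          tauto
      exact ⟨hnD, w, (mem_Dset_iff hM w).mpr ⟨v, hv, q, hqbal⟩, h.symm⟩
end

section
/- Let G be a factorizable graph with perfect matching M, and x ∈ V(G). Then a vertex u lies in D(G−x) if and only if there is an M-saturated path between x and u (an odd-length M-alternating path whose edges in M form a perfect matching of the path). -/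
open SimpleGraph

variable {V : Type*}

section AuxGE
open Set

variable {G : SimpleGraph V} {M N : Set (Sym2 V)}

def cov (N : Set (Sym2 V)) : Set V := {v | ∃ e ∈ N, v ∈ e}

lemma edge_vset_ncard (e : Sym2 V) (hnd : ¬ e.IsDiag) : ({v | v ∈ e} : Set V).ncard = 2 := by
  induction e using Sym2.ind with
  | _ a b =>
    have hab : a ≠ b := by simpa using hnd
    have : ({v | v ∈ s(a,b)} : Set V) = {a, b} := by ext v; simp [Sym2.mem_iff]
    rw [this, Set.ncard_pair hab]

lemma cov_ncard [Finite V] (N : Set (Sym2 V))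
    (hnd : ∀ e ∈ N, ¬ e.IsDiag)
    (hdisj : ∀ (v : V), ∀ e ∈ N, ∀ f ∈ N, v ∈ e → v ∈ f → e = f) :
    (cov N).ncard = 2 * N.ncard := by
  revert hnd hdisj
  refine Set.Finite.induction_on
    (motive := fun N _ => (∀ e ∈ N, ¬ e.IsDiag) →
      (∀ (v : V), ∀ e ∈ N, ∀ f ∈ N, v ∈ e → v ∈ f → e = f) →
      (cov N).ncard = 2 * N.ncard) N (Set.toFinite N) ?_ ?_
  · intro _ _; simp [cov]
  · intro e s he hs IH hnd hdisj
    have hcov : cov (insert e s) = {v | v ∈ e} ∪ cov s := by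
      ext v
      simp only [cov, mem_setOf_eq, mem_insert_iff, mem_union]
      constructor
      · rintro ⟨f, (rfl | hf), hvf⟩
        · exact Or.inl hvf
        · exact Or.inr ⟨f, hf, hvf⟩
      · rintro (hv | ⟨f, hf, hvf⟩)
        · exact ⟨e, Or.inl rfl, hv⟩
        · exact ⟨f, Or.inr hf, hvf⟩
    have hdisj2 : Disjoint ({v | v ∈ e} : Set V) (cov s) := by
      rw [Set.disjoint_left]
      rintro v hv ⟨f, hf, hvf⟩
      exact he (hdisj v e (Or.inl rfl) f (Or.inr hf) hv hvf ▸ hf)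
    rw [hcov, Set.ncard_union_eq hdisj2 (Set.toFinite _) (Set.toFinite _),
      edge_vset_ncard e (hnd e (Or.inl rfl)),
      IH (fun f hf => hnd f (Or.inr hf))
        (fun v f hf g hg hvf hvg => hdisj v f (Or.inr hf) g (Or.inr hg) hvf hvg),
      Set.ncard_insert_of_notMem he (Set.toFinite _)]
    ring


variable {G : SimpleGraph V} {M N : Set (Sym2 V)}

lemma IsMatchingSet.not_isDiag (hN : IsMatchingSet G N) : ∀ e ∈ N, ¬ e.IsDiag :=
  fun _ he => G.not_isDiag_of_mem_edgeSet (hN.1 he)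

lemma IsMatchingSet.partner_unique (hN : IsMatchingSet G N) {v w w' : V}
    (h : s(v,w) ∈ N) (h' : s(v,w') ∈ N) : w = w' := by
  have := hN.2 v _ h _ h' (by simp) (by simp)
  exact Sym2.congr_right.mp this

lemma IsPerfectMatchingSet.isMatchingSet (hM : IsPerfectMatchingSet G M) :
    IsMatchingSet G M :=
  ⟨hM.1, fun v e he f hf hv hv' => ((hM.2 v).unique ⟨he, hv⟩ ⟨hf, hv'⟩)⟩

lemma IsPerfectMatchingSet.exists_partner (hM : IsPerfectMatchingSet G M) (v : V) :
    ∃ w, s(v,w) ∈ M := by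
  obtain ⟨e, ⟨heM, hve⟩, -⟩ := hM.2 v
  obtain ⟨w, rfl⟩ := Sym2.mem_iff_exists.mp hve
  exact ⟨w, heM⟩

lemma IsPerfectMatchingSet.cov_eq (hM : IsPerfectMatchingSet G M) : cov M = univ := by
  ext v
  simp only [cov, mem_setOf_eq, mem_univ, iff_true]
  obtain ⟨w, hw⟩ := hM.exists_partner v
  exact ⟨_, hw, by simp⟩


def Mdiff (M E : Set (Sym2 V)) : Set (Sym2 V) := (M \ E) ∪ (E \ M)

lemma cov_insert (e : Sym2 V) (N : Set (Sym2 V)) :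
    cov (insert e N) = {v | v ∈ e} ∪ cov N := by
  ext v
  simp only [cov, mem_setOf_eq, mem_insert_iff, mem_union]
  constructor
  · rintro ⟨f, (rfl | hf), hvf⟩
    · exact Or.inl hvf
    · exact Or.inr ⟨f, hf, hvf⟩
  · rintro (hv | ⟨f, hf, hvf⟩)
    · exact ⟨e, Or.inl rfl, hv⟩
    · exact ⟨f, Or.inr hf, hvf⟩

lemma saturated_switch (hM : IsPerfectMatchingSet G M) :
    ∀ (n : ℕ) {a b : V} (p : G.Walk a b), p.length ≤ n → IsSaturatedPath M p →
      IsMatchingSet G (Mdiff M {e | e ∈ p.edges}) ∧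
        cov (Mdiff M {e | e ∈ p.edges}) = ({a, b}ᶜ : Set V) := by
  intro n
  induction n with
  | zero =>
    intro a b p hlen hsat
    exfalso
    obtain ⟨k, hk⟩ := hsat.2.1
    omega
  | succ n IH =>
    intro a b p hlen hsat
    cases p with
    | nil => exfalso; have := hsat.2.1; simp at this
    | @cons _ c _ h₁ p₁ =>
      cases p₁ with
      | nil =>
        -- base case : single edge
        have hedges : (Walk.cons h₁ (Walk.nil)).edges = [s(a, b)] := by simp
        have he1M : s(a, b) ∈ M := hsat.2.2.2 _ (by rw [hedges]; rfl)
        have hE : {e | e ∈ (Walk.cons h₁ (Walk.nil : G.Walk b b)).edges} = {s(a,b)} := by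
          ext e; simp
        rw [hE]
        have hab : a ≠ b := h₁.ne
        have hMd : Mdiff M {s(a,b)} = M \ {s(a,b)} := by
          ext e
          simp only [Mdiff, mem_union, mem_diff, mem_singleton_iff]
          constructor
          · rintro (h | ⟨rfl, h⟩)
            · exact h
            · exact absurd he1M h
          · exact Or.inl
        rw [hMd]
        constructor
        · exact ⟨fun e he => hM.1 he.1,
            fun v e he f hf hv hv' => hM.isMatchingSet.2 v e he.1 f hf.1 hv hv'⟩
        · ext v
          simp only [cov, mem_setOf_eq, mem_diff, mem_singleton_iff, mem_compl_iff,
            mem_insert_iff]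
          constructor
          · rintro ⟨e, ⟨heM, hne⟩, hve⟩
            rintro (rfl | rfl)
            · exact hne (hM.isMatchingSet.2 v e heM _ he1M hve (by simp))
            · exact hne (hM.isMatchingSet.2 v e heM _ he1M hve (by simp))
          · intro hv
            obtain ⟨w, hw⟩ := hM.exists_partner v
            refine ⟨s(v,w), ⟨hw, ?_⟩, by simp⟩
            intro hEq
            have : v ∈ s(a,b) := hEq ▸ (by simp : v ∈ s(v,w))
            simp only [Sym2.mem_iff] at this
            tauto
      | @cons _ d _ h₂ q =>
        -- step case
        set e₁ := s(a, c) with he₁def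
        set e₂ := s(c, d) with he₂def
        have hedges : (Walk.cons h₁ (Walk.cons h₂ q)).edges = e₁ :: e₂ :: q.edges := by simp; exact ⟨rfl, rfl⟩
        have hsupp : (Walk.cons h₁ (Walk.cons h₂ q)).support = a :: c :: q.support := by simp
        have hnodup : ((a : V) :: c :: q.support).Nodup := by
          have := hsat.1.support_nodup; rwa [hsupp] at this
        have haq : a ∉ q.support := by
          simp only [List.nodup_cons] at hnodup
          exact fun h => hnodup.1 (by simp [h])
        have hcq : c ∉ q.support := by
          simp only [List.nodup_cons] at hnodup
          exact hnodup.2.1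
        have hac : a ≠ c := by
          simp only [List.nodup_cons] at hnodup
          exact fun h => hnodup.1 (by simp [h])
        have hcd : c ≠ d := h₂.ne
        have had : a ≠ d := fun h => haq (h ▸ q.start_mem_support)
        have hbq : b ∈ q.support := q.end_mem_support
        have hab : a ≠ b := fun h => haq (h ▸ hbq)
        have hcb : c ≠ b := fun h => hcq (h ▸ hbq)
        have he1M : e₁ ∈ M := hsat.2.2.2 _ (by rw [hedges]; rfl)
        have halt : List.Chain' (fun e f => e ∈ M ↔ f ∉ M) (e₁ :: e₂ :: q.edges) := by
          have := hsat.2.2.1; rwa [IsAltWalk, hedges] at this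
        have he2M : e₂ ∉ M := by
          unfold List.Chain' at halt
          rw [List.isChain_cons_cons] at halt
          exact halt.1.mp he1M
        have hqpath : q.IsPath := hsat.1.of_cons.of_cons
        have hqsat : IsSaturatedPath M q := by
          refine ⟨hqpath, ?_, ?_, ?_⟩
          · have := hsat.2.1; simp only [Walk.length_cons] at this
            obtain ⟨k, hk⟩ := this
            exact ⟨k - 1, by omega⟩
          · exact (List.isChain_cons.mp ((List.isChain_cons_cons.mp halt).2)).2
          · intro e he
            have h2 := (List.isChain_cons_cons.mp halt).2
            rw [List.isChain_cons] at h2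
            have := h2.1 e he
            tauto
        have hdb : d ≠ b := by
          intro h
          subst h
          rw [Walk.isPath_iff_eq_nil] at hqpath
          subst hqpath
          obtain ⟨k, hk⟩ := hqsat.2.1
          simp at hk
        have hqlen : q.length ≤ n := by
          simp only [Walk.length_cons] at hlen; omega
        obtain ⟨hNq_match, hNq_cov⟩ := IH q hqlen hqsat
        set Eq' : Set (Sym2 V) := {e | e ∈ q.edges} with hEq'def
        set Nq : Set (Sym2 V) := Mdiff M Eq' with hNqdef
        have he1q : e₁ ∉ Eq' := fun h => haq (Walk.fst_mem_support_of_mem_edges q h)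
        have he2q : e₂ ∉ Eq' := fun h => hcq (Walk.fst_mem_support_of_mem_edges q h)
        have hEp : {e | e ∈ (Walk.cons h₁ (Walk.cons h₂ q)).edges}
            = insert e₁ (insert e₂ Eq') := by
          ext e
          simp only [hedges, List.mem_cons, mem_setOf_eq, mem_insert_iff, hEq'def]
        have claimA : ∀ f ∈ Nq, a ∈ f → f = e₁ := by
          rintro f (⟨hfM, hfq⟩ | ⟨hfq, hfM⟩) haf
          · exact hM.isMatchingSet.2 a f hfM e₁ he1M haf (by simp [he₁def])
          · exfalso
            obtain ⟨z, rfl⟩ := Sym2.mem_iff_exists.mp haf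
            exact haq (Walk.fst_mem_support_of_mem_edges q hfq)
        have claimB : ∀ f ∈ Nq, c ∈ f → f = e₁ := by
          rintro f (⟨hfM, hfq⟩ | ⟨hfq, hfM⟩) hcf
          · exact hM.isMatchingSet.2 c f hfM e₁ he1M hcf (by simp [he₁def])
          · exfalso
            obtain ⟨z, rfl⟩ := Sym2.mem_iff_exists.mp hcf
            exact hcq (Walk.fst_mem_support_of_mem_edges q hfq)
        have hcovq : cov (Nq \ {e₁}) = cov Nq \ {a, c} := by
          ext v
          simp only [cov, mem_setOf_eq, mem_diff, mem_singleton_iff, mem_insert_iff]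
          constructor
          · rintro ⟨f, ⟨hf, hfne⟩, hvf⟩
            refine ⟨⟨f, hf, hvf⟩, ?_⟩
            rintro (rfl | rfl)
            · exact hfne (claimA f hf hvf)
            · exact hfne (claimB f hf hvf)
          · rintro ⟨⟨f, hf, hvf⟩, hv⟩
            refine ⟨f, ⟨hf, ?_⟩, hvf⟩
            rintro rfl
            rw [he₁def] at hvf
            simp only [Sym2.mem_iff] at hvf
            tauto
        have h12 : e₁ ≠ e₂ := fun h => he2M (h ▸ he1M)
        have hNp_eq : Mdiff M (insert e₁ (insert e₂ Eq')) = insert e₂ (Nq \ {e₁}) := by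
          ext e
          simp only [Mdiff, hNqdef, mem_union, mem_diff, mem_insert_iff, mem_singleton_iff]
          by_cases h1 : e = e₁
          · rw [h1]
            simp [he1M, h12, he1q]
          · by_cases h2 : e = e₂
            · rw [h2]
              simp [he2M, he2q, h12.symm]
            · simp only [h1, h2, false_or, or_false]
              tauto
        rw [hEp, hNp_eq]
        have he2set : ({v | v ∈ e₂} : Set V) = {c, d} := by
          ext v; simp [he₂def, Sym2.mem_iff]
        constructor
        · constructor
          · rintro e (rfl | ⟨he, -⟩)
            · exact (SimpleGraph.mem_edgeSet G).mpr h₂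
            · exact hNq_match.1 he
          · intro v e he f hf hv hv'
            rcases he with rfl | ⟨heq, hene⟩ <;> rcases hf with rfl | ⟨hfq, hfne⟩
            · rfl
            · exfalso
              rw [he₂def] at hv
              rcases Sym2.mem_iff.mp hv with rfl | rfl
              · exact hfne (claimB f hfq hv')
              · have : v ∈ cov Nq := ⟨f, hfq, hv'⟩
                rw [hNq_cov] at this
                simp at this
            · exfalso
              rw [he₂def] at hv'
              rcases Sym2.mem_iff.mp hv' with rfl | rfl
              · exact hene (claimB e heq hv)
              · have : v ∈ cov Nq := ⟨e, heq, hv⟩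
                rw [hNq_cov] at this
                simp at this
            · exact hNq_match.2 v e heq f hfq hv hv'
        · rw [cov_insert, hcovq, hNq_cov, he2set]
          ext v
          simp only [mem_union, mem_insert_iff, mem_singleton_iff, mem_diff,
            mem_compl_iff, not_or]
          constructor
          · rintro ((rfl | rfl) | ⟨⟨hvd, hvb⟩, hva, hvc⟩)
            · exact ⟨fun h => hac h.symm, hcb⟩
            · exact ⟨fun h => had h.symm, hdb⟩
            · exact ⟨hva, hvb⟩
          · rintro ⟨hva, hvb⟩
            by_cases hvc : v = c
            · exact Or.inl (Or.inl hvc)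
            · by_cases hvd : v = d
              · exact Or.inl (Or.inr hvd)
              · exact Or.inr ⟨⟨hvd, hvb⟩, hva, hvc⟩

lemma IsPerfectMatchingSet.partner_unique (hM : IsPerfectMatchingSet G M) {v w w' : V}
    (h : s(v,w) ∈ M) (h' : s(v,w') ∈ M) : w = w' :=
  hM.isMatchingSet.partner_unique h h'

lemma build_tail [Finite V] (hM : IsPerfectMatchingSet G M)
    {x u : V} (N : Set (Sym2 V)) (hNsub : N ⊆ G.edgeSet)
    (hNdisj : ∀ v, ∀ e ∈ N, ∀ f ∈ N, v ∈ e → v ∈ f → e = f)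
    (hNcov : cov N = ({x, u} : Set V)ᶜ) :
    ∀ (n : ℕ) (S : Set V) (v : V), (Sᶜ).ncard ≤ n → x ∈ S → v ∉ S →
      (∃ a ∈ S, s(a, v) ∈ M) →
      (∀ s ∈ S, ∀ t, s(s, t) ∈ M → t ∈ S ∪ {v}) →
      (∀ s ∈ S, s ≠ x → ∀ t, s(s, t) ∈ N → t ∈ S) →
      ∃ q : G.Walk v u, q.IsPath ∧ Even q.length ∧ IsAltWalk M q ∧
        (∀ e, q.edges.head? = some e → e ∉ M) ∧ ∀ w ∈ q.support, w ∉ S := by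
  intro n
  induction n with
  | zero =>
    intro S v hn hxS hvS _ _ _
    exfalso
    have : (Sᶜ : Set V) = ∅ := by
      have := Set.ncard_eq_zero (Set.toFinite (Sᶜ)) |>.mpr
      exact (Set.ncard_eq_zero (Set.toFinite (Sᶜ))).mp (Nat.le_zero.mp hn)
    exact absurd (this ▸ hvS : v ∈ (∅ : Set V)) (Set.notMem_empty v)
  | succ n IH =>
    intro S v hn hxS hvS hpartner hinvM hinvN
    obtain ⟨a, haS, haM⟩ := hpartner
    by_cases hcovv : v ∈ cov N
    · obtain ⟨e, heN, hve⟩ := hcovv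
      obtain ⟨w, rfl⟩ := Sym2.mem_iff_exists.mp hve
      have hadjvw : G.Adj v w := (SimpleGraph.mem_edgeSet G).mp (hNsub heN)
      have hvw : v ≠ w := hadjvw.ne
      have hxcov : x ∉ cov N := by rw [hNcov]; simp
      have hwx : w ≠ x := fun h => hxcov ⟨s(v,w), heN, by simp [h]⟩
      have hwS : w ∉ S := fun h =>
        hvS (hinvN w h hwx v (Sym2.eq_swap ▸ heN))
      obtain ⟨z, hzM⟩ := hM.exists_partner w
      have hadjwz : G.Adj w z := (SimpleGraph.mem_edgeSet G).mp (hM.1 hzM)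
      have hzw : z ≠ w := hadjwz.ne.symm
      have hswvM : s(v,w) ∉ M := by
        intro h
        have : w = a := hM.partner_unique h (Sym2.eq_swap ▸ haM)
        exact hwS (this ▸ haS)
      have hzv : z ≠ v := by
        rintro rfl
        have : w = a := hM.partner_unique (Sym2.eq_swap ▸ hzM) (Sym2.eq_swap ▸ haM)
        exact hwS (this ▸ haS)
      have hzS : z ∉ S := by
        intro h
        have := hinvM z h w (Sym2.eq_swap ▸ hzM)
        rcases this with h' | h'
        · exact hwS h'
        · have hwv : w = v := by simpa using h'
          exact hvw hwv.symm
      -- cardinality decrease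
      have hvmem : v ∈ (Sᶜ : Set V) := hvS
      have hcard : ((insert w (insert v S))ᶜ).ncard ≤ n := by
        have hsub : ((insert w (insert v S))ᶜ : Set V) ⊆ Sᶜ \ {v} := by
          intro t ht
          simp only [Set.mem_compl_iff, Set.mem_insert_iff, not_or] at ht
          exact ⟨ht.2.2, ht.2.1⟩
        have h1 : ((insert w (insert v S))ᶜ).ncard ≤ (Sᶜ \ {v}).ncard :=
          Set.ncard_le_ncard hsub (Set.toFinite _)
        have h2 : (Sᶜ \ {v}).ncard = (Sᶜ).ncard - 1 :=
          Set.ncard_diff_singleton_of_mem hvmem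
        have h3 : 1 ≤ (Sᶜ).ncard := by
          exact (Set.ncard_pos (Set.toFinite _)).mpr ⟨v, hvmem⟩
        omega
      have hinvM' : ∀ s ∈ insert w (insert v S), ∀ t, s(s, t) ∈ M →
          t ∈ insert w (insert v S) ∪ {z} := by
        intro s hs t htM
        rcases hs with rfl | rfl | hs
        · have : t = z := hM.partner_unique htM hzM
          exact Or.inr (by simp [this])
        · have : t = a := hM.partner_unique htM (Sym2.eq_swap ▸ haM)
          exact Or.inl (by simp [this, haS])
        · rcases hinvM s hs t htM with h' | h'
          · exact Or.inl (by simp [h'])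
          · exact Or.inl (by simp at h'; simp [h'])
      have hinvN' : ∀ s ∈ insert w (insert v S), s ≠ x → ∀ t, s(s, t) ∈ N →
          t ∈ insert w (insert v S) := by
        intro s hs hsx t htN
        rcases hs with rfl | rfl | hs
        · have : s(s, t) = s(s, v) := hNdisj s _ htN _ (Sym2.eq_swap ▸ heN) (by simp) (by simp)
          have : t = v := Sym2.congr_right.mp this
          simp [this]
        · have : s(s, t) = s(s, w) := hNdisj s _ htN _ heN (by simp) (by simp)
          have : t = w := Sym2.congr_right.mp this
          simp [this]
        · exact Or.inr (Or.inr (hinvN s hs hsx t htN))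
      obtain ⟨q', hq'path, hq'even, hq'alt, hq'head, hq'S⟩ :=
        IH (insert w (insert v S)) z hcard (by simp [hxS])
          (by simp [hzS, hzv, hzw]) ⟨w, by simp, Sym2.eq_swap ▸ hzM⟩ hinvM' hinvN'
      refine ⟨Walk.cons hadjvw (Walk.cons hadjwz q'), ?_, ?_, ?_, ?_, ?_⟩
      · rw [Walk.isPath_def]
        simp only [Walk.support_cons, List.nodup_cons]
        refine ⟨?_, ?_, hq'path.support_nodup⟩
        · intro h
          simp only [List.mem_cons] at h
          rcases h with h | h
          · exact hvw h
          · exact hq'S v h (by simp)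
        · intro h
          exact hq'S w h (by simp)
      · simp only [Walk.length_cons]
        obtain ⟨k, hk⟩ := hq'even
        exact ⟨k + 1, by omega⟩
      · rw [IsAltWalk]
        simp only [Walk.edges_cons]
        unfold List.Chain'
        rw [List.isChain_cons_cons]
        refine ⟨iff_of_false hswvM (not_not_intro hzM), ?_⟩
        rw [List.isChain_cons]
        exact ⟨fun y hy => iff_of_true hzM (hq'head y hy), hq'alt⟩
      · intro e he
        simp only [Walk.edges_cons, List.head?_cons, Option.some.injEq] at he
        rw [← he]
        exact hswvM
      · intro t ht
        simp only [Walk.support_cons, List.mem_cons] at ht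
        rcases ht with rfl | rfl | ht
        · exact hvS
        · exact hwS
        · intro h
          exact hq'S t ht (by simp [h])
    · -- v is exposed by N, hence v = u
      have hvu : v = u := by
        rw [hNcov] at hcovv
        simp only [Set.mem_compl_iff, Set.mem_insert_iff, Set.mem_singleton_iff,
          not_not] at hcovv
        rcases hcovv with rfl | rfl
        · exact absurd hxS hvS
        · rfl
      subst hvu
      exact ⟨Walk.nil, Walk.IsPath.nil, ⟨0, rfl⟩, List.isChain_nil, by simp, by
        intro w hw
        simp only [Walk.support_nil, List.mem_singleton] at hw
        exact hw ▸ hvS⟩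

lemma ncard_compl_singleton' {α : Type*} [Finite α] (a : α) :
    ({a}ᶜ : Set α).ncard = Nat.card α - 1 := by
  rw [Set.compl_eq_univ_diff, Set.ncard_diff_singleton_of_mem (Set.mem_univ a)
    , Set.ncard_univ]

section Induced

variable [Finite V] {x : V}

def resE (x : V) (N : Set (Sym2 V)) : Set (Sym2 ↥({x}ᶜ : Set V)) :=
  {e | e.map Subtype.val ∈ N}

def liftE (x : V) (N : Set (Sym2 ↥({x}ᶜ : Set V))) : Set (Sym2 V) :=
  Sym2.map Subtype.val '' N

lemma induce_adj' {a b : ↥({x}ᶜ : Set V)} :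
    (G.induce ({x}ᶜ : Set V)).Adj a b ↔ G.Adj a b := by
  simp [comap_adj]

lemma resE_isMatchingSet {N : Set (Sym2 V)} (hN : IsMatchingSet G N) :
    IsMatchingSet (G.induce ({x}ᶜ : Set V)) (resE x N) := by
  constructor
  · intro e he
    induction e using Sym2.ind with
    | _ a b =>
      simp only [resE, Set.mem_setOf_eq, Sym2.map_pair_eq] at he
      exact (SimpleGraph.mem_edgeSet _).mpr
        (induce_adj'.mpr ((SimpleGraph.mem_edgeSet G).mp (hN.1 he)))
  · intro v e he f hf hv hv'
    have h1 : (v : V) ∈ e.map Subtype.val := Sym2.mem_map.mpr ⟨v, hv, rfl⟩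
    have h2 : (v : V) ∈ f.map Subtype.val := Sym2.mem_map.mpr ⟨v, hv', rfl⟩
    have := hN.2 v _ he _ hf h1 h2
    exact Sym2.map.injective Subtype.val_injective this

lemma liftE_isMatchingSet {N : Set (Sym2 ↥({x}ᶜ : Set V))}
    (hN : IsMatchingSet (G.induce ({x}ᶜ : Set V)) N) :
    IsMatchingSet G (liftE x N) := by
  constructor
  · rintro e ⟨f, hf, rfl⟩
    induction f using Sym2.ind with
    | _ a b =>
      rw [Sym2.map_pair_eq]
      exact (SimpleGraph.mem_edgeSet G).mpr
        (induce_adj'.mp ((SimpleGraph.mem_edgeSet _).mp (hN.1 hf)))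
  · rintro v e ⟨e', he', rfl⟩ f ⟨f', hf', rfl⟩ hv hv'
    obtain ⟨a, ha, rfl⟩ := Sym2.mem_map.mp hv
    obtain ⟨b, hb, hba⟩ := Sym2.mem_map.mp hv'
    have hab : b = a := Subtype.val_injective hba
    subst hab
    rw [hN.2 b e' he' f' hf' ha hb]

lemma liftE_cov {N : Set (Sym2 ↥({x}ᶜ : Set V))} :
    cov (liftE x N) = Subtype.val '' cov N := by
  ext v
  constructor
  · rintro ⟨e, ⟨e', he', rfl⟩, hv⟩
    obtain ⟨a, ha, rfl⟩ := Sym2.mem_map.mp hv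
    exact ⟨a, ⟨e', he', ha⟩, rfl⟩
  · rintro ⟨a, ⟨e', he', ha⟩, rfl⟩
    exact ⟨e'.map Subtype.val, ⟨e', he', rfl⟩, Sym2.mem_map.mpr ⟨a, ha, rfl⟩⟩

lemma liftE_ncard {N : Set (Sym2 ↥({x}ᶜ : Set V))} : (liftE x N).ncard = N.ncard :=
  Set.ncard_image_of_injective _ (Sym2.map.injective Subtype.val_injective)

lemma resE_cov {N : Set (Sym2 V)} (hx : x ∉ cov N) :
    cov (resE x N) = {w : ↥({x}ᶜ : Set V) | (w : V) ∈ cov N} := by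
  ext w
  constructor
  · rintro ⟨e, he, hw⟩
    exact ⟨e.map Subtype.val, he, Sym2.mem_map.mpr ⟨w, hw, rfl⟩⟩
  · rintro ⟨e, he, hw⟩
    obtain ⟨z, rfl⟩ := Sym2.mem_iff_exists.mp hw
    have hz : z ≠ x := by rintro rfl; exact hx ⟨_, he, by simp⟩
    refine ⟨s(w, ⟨z, hz⟩), ?_, by simp⟩
    simpa [resE, Sym2.map_pair_eq] using he

end Induced


section Max

variable [Finite V] {x : V}

lemma matching_two_ncard {W : Type*} [Finite W] {H : SimpleGraph W} {N : Set (Sym2 W)}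
    (hN : IsMatchingSet H N) : 2 * N.ncard = (cov N).ncard :=
  (cov_ncard N hN.not_isDiag hN.2).symm

lemma perfect_two_ncard (hM : IsPerfectMatchingSet G M) : 2 * M.ncard = Nat.card V := by
  have := matching_two_ncard hM.isMatchingSet
  rwa [hM.cov_eq, Set.ncard_univ] at this

lemma resE_cov_perfect (hM : IsPerfectMatchingSet G M) {z : V} (hz : s(x, z) ∈ M) (hzx : z ≠ x) :
    cov (resE x M) = ({(⟨z, hzx⟩ : ↥({x}ᶜ : Set V))}ᶜ : Set _) := by
  ext w
  simp only [Set.mem_compl_iff, Set.mem_singleton_iff]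
  constructor
  · rintro ⟨e, he, hw⟩ rfl
    obtain ⟨y, rfl⟩ := Sym2.mem_iff_exists.mp hw
    have hmap : s((z : V), (y : V)) ∈ M := by
      simpa [resE, Sym2.map_pair_eq] using he
    have : (y : V) = x := hM.partner_unique hmap (Sym2.eq_swap ▸ hz)
    exact y.2 (by simp [this])
  · intro hwz
    obtain ⟨t, ht⟩ := hM.exists_partner (w : V)
    have htx : t ≠ x := by
      rintro rfl
      have : (w : V) = z := hM.partner_unique (Sym2.eq_swap ▸ ht) hz
      exact hwz (Subtype.ext this)
    refine ⟨s(w, ⟨t, htx⟩), ?_, by simp⟩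
    simpa [resE, Sym2.map_pair_eq] using ht

lemma max_of_cov_compl (hM : IsPerfectMatchingSet G M) {N' : Set (Sym2 ↥({x}ᶜ : Set V))}
    (hN' : IsMatchingSet (G.induce ({x}ᶜ : Set V)) N')
    {u' : ↥({x}ᶜ : Set V)} (hcov : cov N' = ({u'}ᶜ : Set _)) :
    IsMaximumMatchingSet (G.induce ({x}ᶜ : Set V)) N' := by
  have hxV : Nonempty V := ⟨x⟩
  have hVpos : 1 ≤ Nat.card V := Nat.card_pos
  have hW : Nat.card ↥({x}ᶜ : Set V) = Nat.card V - 1 := by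
    rw [Nat.card_coe_set_eq, ncard_compl_singleton']
  have hMn := perfect_two_ncard hM
  refine ⟨hN', fun N'' hN'' => ?_⟩
  have h1 : 2 * N''.ncard ≤ Nat.card ↥({x}ᶜ : Set V) := by
    rw [matching_two_ncard hN'']
    have : cov N'' ⊆ Set.univ := Set.subset_univ _
    calc (cov N'').ncard ≤ (Set.univ : Set ↥({x}ᶜ : Set V)).ncard :=
          Set.ncard_le_ncard this (Set.toFinite _)
      _ = Nat.card ↥({x}ᶜ : Set V) := Set.ncard_univ _
  have h2 : 2 * N'.ncard = Nat.card ↥({x}ᶜ : Set V) - 1 := by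
    rw [matching_two_ncard hN', hcov, ncard_compl_singleton']
  omega

lemma cov_of_max (hM : IsPerfectMatchingSet G M) {N' : Set (Sym2 ↥({x}ᶜ : Set V))}
    (hmax : IsMaximumMatchingSet (G.induce ({x}ᶜ : Set V)) N')
    {u' : ↥({x}ᶜ : Set V)} (hexp : ∀ e ∈ N', u' ∉ e) :
    cov N' = ({u'}ᶜ : Set _) := by
  have hxV : Nonempty V := ⟨x⟩
  have hVpos : 1 ≤ Nat.card V := Nat.card_pos
  have hW : Nat.card ↥({x}ᶜ : Set V) = Nat.card V - 1 := by
    rw [Nat.card_coe_set_eq, ncard_compl_singleton']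
  have hMn := perfect_two_ncard hM
  obtain ⟨z, hz⟩ := hM.exists_partner x
  have hzx : z ≠ x := ((SimpleGraph.mem_edgeSet G).mp (hM.1 hz)).ne'
  have hM0 : IsMatchingSet (G.induce ({x}ᶜ : Set V)) (resE x M) :=
    resE_isMatchingSet hM.isMatchingSet
  have hM0cov := resE_cov_perfect hM hz hzx
  have hM0n : 2 * (resE x M).ncard = Nat.card ↥({x}ᶜ : Set V) - 1 := by
    rw [matching_two_ncard hM0, hM0cov, ncard_compl_singleton']
  have hle : (resE x M).ncard ≤ N'.ncard := hmax.2 _ hM0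
  have hsub : cov N' ⊆ ({u'}ᶜ : Set _) := by
    rintro w ⟨e, he, hw⟩ hwu
    rw [Set.mem_singleton_iff] at hwu
    exact hexp e he (hwu ▸ hw)
  refine Set.eq_of_subset_of_ncard_le hsub ?_ (Set.toFinite _)
  rw [ncard_compl_singleton', ← matching_two_ncard hmax.1]
  omega

end Max

end AuxGE

theorem stmt2 [Finite V] (G : SimpleGraph V) (M : Set (Sym2 V))
    (hM : IsPerfectMatchingSet G M) (x u : V) (hu : u ∈ ({x}ᶜ : Set V)) :
    (⟨u, hu⟩ : ({x}ᶜ : Set V)) ∈ Dset (G.induce ({x}ᶜ : Set V)) ↔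
      ∃ p : G.Walk x u, IsSaturatedPath M p := by

  have hux : u ≠ x := hu
  constructor
  · rintro ⟨N', hmax, hexp⟩
    have hcov' : cov N' = ({(⟨u, hu⟩ : ↥({x}ᶜ : Set V))}ᶜ : Set _) :=
      cov_of_max hM hmax hexp
    set N := liftE x N' with hNdef
    have hNmatch : IsMatchingSet G N := liftE_isMatchingSet hmax.1
    have hNcov : cov N = ({x, u} : Set V)ᶜ := by
      rw [hNdef, liftE_cov, hcov']
      ext v
      simp only [Set.mem_image, Set.mem_compl_iff, Set.mem_singleton_iff,
        Set.mem_insert_iff, not_or]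
      constructor
      · rintro ⟨w, hw, rfl⟩
        exact ⟨w.2, fun h => hw (Subtype.ext h)⟩
      · rintro ⟨hvx, hvu⟩
        exact ⟨⟨v, hvx⟩, fun h => hvu (congrArg Subtype.val h), rfl⟩
    obtain ⟨z, hz⟩ := hM.exists_partner x
    have hadj : G.Adj x z := (SimpleGraph.mem_edgeSet G).mp (hM.1 hz)
    obtain ⟨q, hqpath, hqeven, hqalt, hqhead, hqS⟩ :=
      build_tail hM N hNmatch.1 hNmatch.2 hNcov ((({x} : Set V))ᶜ).ncard {x} z le_rfl
        (Set.mem_singleton x)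
        (by simp [hadj.ne'])
        ⟨x, Set.mem_singleton x, hz⟩
        (by
          intro s hs t ht
          rw [Set.mem_singleton_iff] at hs
          subst hs
          exact Or.inr (by simp [hM.partner_unique ht hz]))
        (by
          intro s hs hsx
          rw [Set.mem_singleton_iff] at hs
          exact absurd hs hsx)
    refine ⟨Walk.cons hadj q, ?_, ?_, ?_, ?_⟩
    · rw [Walk.isPath_def, Walk.support_cons, List.nodup_cons]
      exact ⟨fun h => hqS x h (Set.mem_singleton x), hqpath.support_nodup⟩
    · rw [Walk.length_cons]
      obtain ⟨k, hk⟩ := hqeven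
      exact ⟨k, by omega⟩
    · rw [IsAltWalk, Walk.edges_cons]; unfold List.Chain'; rw [List.isChain_cons]
      exact ⟨fun y hy => iff_of_true hz (hqhead y hy), hqalt⟩
    · intro e he
      rw [Walk.edges_cons] at he
      simp only [List.head?_cons, Option.some.injEq] at he
      exact he ▸ hz
  · rintro ⟨p, hsat⟩
    have hsw := saturated_switch hM p.length p le_rfl hsat
    set N := Mdiff M {e | e ∈ p.edges} with hNdef
    have hxN : x ∉ cov N := by rw [hsw.2]; simp
    have hN' : IsMatchingSet (G.induce ({x}ᶜ : Set V)) (resE x N) :=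
      resE_isMatchingSet hsw.1
    have hcov' : cov (resE x N) = ({(⟨u, hu⟩ : ↥({x}ᶜ : Set V))}ᶜ : Set _) := by
      rw [resE_cov hxN, hsw.2]
      ext w
      simp only [Set.mem_setOf_eq, Set.mem_compl_iff, Set.mem_insert_iff,
        Set.mem_singleton_iff, not_or]
      constructor
      · rintro ⟨hwx, hwu⟩ h
        exact hwu (congrArg Subtype.val h)
      · intro h
        exact ⟨w.2, fun h' => h (Subtype.ext h')⟩
    refine ⟨resE x N, max_of_cov_compl hM hN' hcov', ?_⟩
    intro e he hmem
    have hmem2 : (⟨u, hu⟩ : ↥({x}ᶜ : Set V)) ∈ cov (resE x N) := ⟨e, he, hmem⟩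
    rw [hcov'] at hmem2
    exact hmem2 rfl
end

section
/- Let G be a factorizable graph with perfect matching M, and x ∈ V(G). Then u ∈ C(G−x) if and only if there is neither an M-saturated path between u and x nor an M-balanced path from x to u. -/
open SimpleGraph

variable {V : Type*}

section Lemmas
variable {V : Type*}

lemma sym2_exists (e : Sym2 V) : ∃ a b, e = s(a, b) := by
  induction e using Sym2.ind with
  | _ a b => exact ⟨a, b, rfl⟩

lemma alt_parity {M : Set (Sym2 V)} : ∀ {l : List (Sym2 V)} {a b : Sym2 V},
    List.Chain' (fun e f => e ∈ M ↔ f ∉ M) l → l.head? = some a → l.getLast? = some b →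
    ((a ∈ M ↔ b ∈ M) ↔ Odd l.length)
  | [], a, b => by simp
  | [e], a, b => by
      intro _ ha hb
      simp only [List.head?_cons, Option.some_inj] at ha
      simp only [List.getLast?_singleton, Option.some_inj] at hb
      subst ha; subst hb
      simp [Nat.odd_iff]
  | e :: f :: t, a, b => by
      intro hc ha hb
      simp only [List.head?_cons, Option.some_inj] at ha
      subst ha
      obtain ⟨h2, hc'⟩ := List.isChain_cons_cons.mp hc
      have h1 : (f ∈ M ↔ b ∈ M) ↔ Odd (f :: t).length :=
        alt_parity hc' (by simp) (by rw [← hb, List.getLast?_cons_cons])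
      rw [show (e :: f :: t).length = (f :: t).length + 1 from rfl, Nat.odd_add_one, ← h1]
      tauto

/-- support of a matching -/
def suppOf (N : Set (Sym2 V)) : Set V := {v | ∃ e ∈ N, v ∈ e}

lemma matching_support_ncard [Finite V] {G : SimpleGraph V} {N : Set (Sym2 V)}
    (hN : IsMatchingSet G N) : (suppOf N).ncard = 2 * N.ncard := by
  classical
  generalize hn : N.ncard = n
  induction n using Nat.strong_induction_on generalizing N with
  | _ n IH =>
  rcases eq_or_ne n 0 with rfl | hn0
  · have : N = ∅ := by rwa [Set.ncard_eq_zero (Set.toFinite N)] at hn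
    subst this
    simp [suppOf]
  · have hne : N.Nonempty := by
      rw [Set.nonempty_iff_ne_empty]
      rintro rfl; simp at hn; omega
    obtain ⟨e, he⟩ := hne
    obtain ⟨a, b, rfl⟩ := sym2_exists e
    have hab : a ≠ b := (hN.1 he).ne
    set N' := N \ {s(a, b)} with hN'def
    have hN' : IsMatchingSet G N' := ⟨fun f hf => hN.1 hf.1,
      fun v f hf g hg => hN.2 v f hf.1 g hg.1⟩
    have hcard0 : N'.ncard + 1 = n := by
      have h := Set.ncard_diff_singleton_add_one he (Set.toFinite N)
      rw [← hN'def] at h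
      omega
    have hcard : N'.ncard = n - 1 := by omega
    have hsupp : suppOf N = suppOf N' ∪ {a, b} := by
      ext v
      constructor
      · rintro ⟨f, hf, hvf⟩
        by_cases hfe : f = s(a, b)
        · subst hfe
          right
          rcases Sym2.mem_iff.mp hvf with rfl | rfl <;> simp
        · exact Or.inl ⟨f, ⟨hf, hfe⟩, hvf⟩
      · rintro (⟨f, hf, hvf⟩ | hv)
        · exact ⟨f, hf.1, hvf⟩
        · refine ⟨s(a, b), he, ?_⟩
          rcases hv with rfl | rfl <;> simp
    have hdisj : Disjoint (suppOf N') ({a, b} : Set V) := by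
      rw [Set.disjoint_right]
      rintro v hv ⟨f, hf, hvf⟩
      have : f = s(a, b) := hN.2 v f hf.1 _ he hvf (by rcases hv with rfl | rfl <;> simp)
      exact hf.2 this
    rw [hsupp, Set.ncard_union_eq hdisj (Set.toFinite _) (Set.toFinite _),
      IH (n - 1) (by omega) hN' hcard, Set.ncard_pair hab]
    omega

lemma matching_ncard_le [Finite V] {G : SimpleGraph V} {N : Set (Sym2 V)}
    (hN : IsMatchingSet G N) : 2 * N.ncard ≤ Nat.card V := by
  rw [← matching_support_ncard hN, ← Set.ncard_univ]
  exact Set.ncard_le_ncard (Set.subset_univ _) (Set.toFinite _)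


lemma mem_support_of_mem_edges'_s3 {G : SimpleGraph V} {a b v : V} {p : G.Walk a b} {f : Sym2 V}
    (hf : f ∈ p.edges) (hv : v ∈ f) : v ∈ p.support := by
  obtain ⟨s, t, rfl⟩ := sym2_exists f
  rcases Sym2.mem_iff.mp hv with rfl | rfl
  · exact p.fst_mem_support_of_mem_edges hf
  · exact p.snd_mem_support_of_mem_edges hf

lemma head_edge_of_start {G : SimpleGraph V} {a b : V} {p : G.Walk a b} (hp : p.IsPath)
    {f : Sym2 V} (hf : f ∈ p.edges) (haf : a ∈ f) : p.edges.head? = some f := by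
  cases p with
  | nil => simp at hf
  | cons h q =>
    rw [Walk.edges_cons] at hf ⊢
    rcases List.mem_cons.mp hf with rfl | hf'
    · simp
    · exact absurd (mem_support_of_mem_edges'_s3 hf' haf) ((Walk.cons_isPath_iff _ _).mp hp).2

lemma first_edge_mem {G : SimpleGraph V} {a b : V} {p : G.Walk a b} {f : Sym2 V}
    (hf : p.edges.head? = some f) : a ∈ f := by
  cases p with
  | nil => simp at hf
  | cons h q =>
    rw [Walk.edges_cons, List.head?_cons, Option.some_inj] at hf
    rw [← hf]; simp

lemma last_edge_mem {G : SimpleGraph V} {a b : V} {p : G.Walk a b} {f : Sym2 V}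
    (hf : p.edges.getLast? = some f) : b ∈ f := by
  have h2 : p.reverse.edges.head? = some f := by
    rw [Walk.edges_reverse, List.head?_reverse]; exact hf
  exact first_edge_mem h2

lemma isAltWalk_reverse {G : SimpleGraph V} {M : Set (Sym2 V)} {a b : V} {p : G.Walk a b}
    (h : IsAltWalk M p) : IsAltWalk M p.reverse := by
  unfold IsAltWalk at h ⊢
  rw [Walk.edges_reverse]
  exact List.isChain_reverse.mpr (List.IsChain.imp (fun e f hef => by tauto) h)

lemma edges_ne_nil_of_ne {G : SimpleGraph V} {a b : V} {p : G.Walk a b} (hab : a ≠ b) :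
    p.edges ≠ [] := by
  intro h
  apply hab
  have hlen : p.length = 0 := by rw [← Walk.length_edges, h]; rfl
  exact Walk.eq_of_length_eq_zero hlen

lemma altCoverHead {G : SimpleGraph V} {M : Set (Sym2 V)} :
    ∀ {a b : V} (p : G.Walk a b), IsAltWalk M p → ∀ v ∈ p.support,
      (∃ g ∈ p.edges, g ∈ M ∧ v ∈ g) ∨
      (v = a ∧ ∀ e, p.edges.head? = some e → e ∉ M) ∨
      v = b
  | a, _, Walk.nil, _, v, hv => Or.inr (Or.inr (by simpa using hv))
  | a, b, @Walk.cons _ _ _ c _ h q, halt, v, hv => by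
    simp only [IsAltWalk, Walk.edges_cons] at halt
    have halt' : IsAltWalk M q := halt.tail
    rw [Walk.support_cons, List.mem_cons] at hv
    rcases hv with rfl | hvq
    · by_cases hM : s(v, c) ∈ M
      · exact Or.inl ⟨s(v, c), by simp, hM, by simp⟩
      · refine Or.inr (Or.inl ⟨rfl, ?_⟩)
        intro e he
        rw [Walk.edges_cons, List.head?_cons, Option.some_inj] at he
        rwa [← he]
    · rcases altCoverHead q halt' v hvq with ⟨g, hg, hgM, hvg⟩ | ⟨hvc, hhead⟩ | hvb
      · exact Or.inl ⟨g, by rw [Walk.edges_cons]; exact List.mem_cons_of_mem _ hg, hgM, hvg⟩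
      · cases q with
        | nil => exact Or.inr (Or.inr hvc)
        | @cons _ d _ h' q' =>
          left
          refine ⟨s(a, c), by simp, ?_, by rw [hvc]; simp⟩
          have hrel : s(a, c) ∈ M ↔ s(c, d) ∉ M := by
            rw [Walk.edges_cons] at halt
            exact (List.isChain_cons_cons.mp halt).1
          exact hrel.mpr (hhead _ (by simp))
      · exact Or.inr (Or.inr hvb)

lemma sat_cover {G : SimpleGraph V} {M : Set (Sym2 V)} {a b : V} {p : G.Walk a b}
    (hab : a ≠ b) (halt : IsAltWalk M p)
    (hhead : ∀ e, p.edges.head? = some e → e ∈ M)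
    (hlast : ∀ e, p.edges.getLast? = some e → e ∈ M) :
    ∀ v ∈ p.support, ∃ g ∈ p.edges, g ∈ M ∧ v ∈ g := by
  intro v hv
  have hen : p.edges ≠ [] := edges_ne_nil_of_ne hab
  rcases altCoverHead p halt v hv with hcov | ⟨rfl, hh⟩ | rfl
  · exact hcov
  · obtain ⟨e, he⟩ := Option.isSome_iff_exists.mp (by rwa [List.isSome_head?])
    exact absurd (hhead e he) (hh e he)
  · have hv' : v ∈ p.reverse.support := by rw [Walk.support_reverse, List.mem_reverse]; exact hv
    rcases altCoverHead p.reverse (isAltWalk_reverse halt) v hv' with hcov | ⟨-, hh⟩ | hva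
    · obtain ⟨g, hg, hgM, hvg⟩ := hcov
      rw [Walk.edges_reverse, List.mem_reverse] at hg
      exact ⟨g, hg, hgM, hvg⟩
    · exfalso
      obtain ⟨e, he⟩ := Option.isSome_iff_exists.mp
        (by rwa [List.getLast?_isSome] : p.edges.getLast?.isSome)
      have he' : p.reverse.edges.head? = some e := by
        rw [Walk.edges_reverse, List.head?_reverse]; exact he
      exact hh e he' (hlast e he)
    · exact absurd hva.symm hab

lemma two_edges_of_interior {G : SimpleGraph V} :
    ∀ {a b : V} (p : G.Walk a b), p.IsPath → ∀ v ∈ p.support, v ≠ a → v ≠ b →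
      ∃ e f, e ∈ p.edges ∧ f ∈ p.edges ∧ e ≠ f ∧ v ∈ e ∧ v ∈ f
  | a, _, Walk.nil, _, v, hv, hva, hvb => absurd (by simpa using hv) hva
  | a, b, @Walk.cons _ _ _ c _ h q, hp, v, hv, hva, hvb => by
    rw [Walk.support_cons, List.mem_cons] at hv
    rcases hv with rfl | hvq
    · exact absurd rfl hva
    · by_cases hvc : v = c
      · subst hvc
        cases q with
        | nil => exact absurd rfl hvb
        | @cons _ d _ h' q' =>
          refine ⟨s(a, v), s(v, d), by simp, by simp, ?_, by simp, by simp⟩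
          intro heq
          rcases Sym2.eq_iff.mp heq with ⟨rfl, rfl⟩ | ⟨rfl, -⟩
          · exact h.ne rfl
          · exact ((Walk.cons_isPath_iff h (Walk.cons h' q')).mp hp).2
              (by rw [Walk.support_cons]; exact List.mem_cons_of_mem _ q'.start_mem_support)
      · obtain ⟨e, f, he, hf, hef, hve, hvf⟩ :=
          two_edges_of_interior q ((Walk.cons_isPath_iff h q).mp hp).1 v hvq hvc hvb
        exact ⟨e, f, by rw [Walk.edges_cons]; exact List.mem_cons_of_mem _ he,
          by rw [Walk.edges_cons]; exact List.mem_cons_of_mem _ hf, hef, hve, hvf⟩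


def AltList : Set (Sym2 V) → Set (Sym2 V) → List (Sym2 V) → Prop
  | _, _, [] => False
  | A, _, [e] => e ∈ A
  | A, B, e :: f :: l => e ∈ A ∧ AltList B A (f :: l)

lemma altList_single {A B : Set (Sym2 V)} {e : Sym2 V} (he : e ∈ A) : AltList A B [e] := by
  simpa [AltList] using he

lemma altList_cons {A B : Set (Sym2 V)} {e : Sym2 V} {l : List (Sym2 V)}
    (he : e ∈ A) (hl : AltList B A l) : AltList A B (e :: l) := by
  cases l with
  | nil => simp [AltList] at hl
  | cons f l' => rw [AltList]; exact ⟨he, hl⟩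

lemma altList_head : ∀ (A B : Set (Sym2 V)) (l : List (Sym2 V)), AltList A B l →
    ∀ e, l.head? = some e → e ∈ A
  | A, B, [], h => h.elim
  | A, B, [g], h => fun e he => by
      obtain rfl : g = e := by simpa using he
      simpa [AltList] using h
  | A, B, g :: g' :: l', h => fun e he => by
      obtain rfl : g = e := by simpa using he
      rw [AltList] at h
      exact h.1

lemma altList_mem : ∀ (A B : Set (Sym2 V)) (l : List (Sym2 V)), AltList A B l →
    ∀ e ∈ l, e ∈ A ∪ B
  | A, B, [], h => h.elim
  | A, B, [g], h => fun e he => by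
      obtain rfl : e = g := by simpa using he
      rw [AltList] at h
      exact Or.inl h
  | A, B, g :: g' :: l', h => fun e he => by
      rw [AltList] at h
      rcases List.mem_cons.mp he with rfl | he'
      · exact Or.inl h.1
      · exact (Set.union_comm A B) ▸ altList_mem B A (g' :: l') h.2 e he'

lemma altList_mono : ∀ (A B A' B' : Set (Sym2 V)), A ⊆ A' → B ⊆ B' →
    ∀ (l : List (Sym2 V)), AltList A B l → AltList A' B' l
  | A, B, A', B', hA, hB, [], h => h.elim
  | A, B, A', B', hA, hB, [g], h => by
      rw [AltList] at h ⊢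
      exact hA h
  | A, B, A', B', hA, hB, g :: g' :: l', h => by
      rw [AltList] at h ⊢
      exact ⟨hA h.1, altList_mono B A B' A' hB hA _ h.2⟩

lemma altList_chain : ∀ (A B : Set (Sym2 V)) (l : List (Sym2 V)), AltList A B l →
    List.Chain' (fun e f => (e ∈ A ∧ f ∈ B) ∨ (e ∈ B ∧ f ∈ A)) l
  | A, B, [], h => h.elim
  | A, B, [g], h => List.isChain_singleton g
  | A, B, g :: g' :: l', h => by
      rw [AltList] at h
      refine List.isChain_cons_cons.mpr ⟨Or.inl ⟨h.1, altList_head B A _ h.2 g' (by simp)⟩, ?_⟩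
      exact (altList_chain B A (g' :: l') h.2).imp fun _ _ hef => hef.symm

lemma altList_isAltWalk {G : SimpleGraph V} {M N : Set (Sym2 V)} {a b : V} {p : G.Walk a b}
    (h : AltList (M \ N) (N \ M) p.edges) : IsAltWalk M p := by
  refine (altList_chain _ _ _ h).imp fun _ _ hef => ?_
  rcases hef with ⟨⟨h1, _⟩, ⟨_, h2⟩⟩ | ⟨⟨_, h1⟩, ⟨h2, _⟩⟩
  · exact iff_of_true h1 h2
  · exact iff_of_false h1 (not_not.mpr h2)

lemma perfect_isMatching {G : SimpleGraph V} {M : Set (Sym2 V)}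
    (hM : IsPerfectMatchingSet G M) : IsMatchingSet G M := by
  refine ⟨hM.1, fun v e he f hf hve hvf => ?_⟩
  obtain ⟨g, -, hg⟩ := hM.2 v
  rw [hg e ⟨he, hve⟩, hg f ⟨hf, hvf⟩]

lemma other_endpoint {G : SimpleGraph V} {e : Sym2 V} (heG : e ∈ G.edgeSet) {u : V}
    (hue : u ∈ e) : ∃ w, w ≠ u ∧ e = s(u, w) ∧ G.Adj u w := by
  obtain ⟨a, b, rfl⟩ := sym2_exists e
  rw [SimpleGraph.mem_edgeSet] at heG
  rcases Sym2.mem_iff.mp hue with rfl | rfl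
  · exact ⟨b, heG.ne', rfl, heG⟩
  · exact ⟨a, heG.ne, Sym2.eq_swap, heG.symm⟩

lemma mem_of_getLast?' {α : Type*} {l : List α} {x : α} (h : l.getLast? = some x) : x ∈ l := by
  obtain ⟨hne, h2⟩ := List.mem_getLast?_eq_getLast (show x ∈ l.getLast? from h)
  rw [h2]
  exact List.getLast_mem hne

lemma greedy [Finite V] {G : SimpleGraph V} {M : Set (Sym2 V)}
    (hM : IsPerfectMatchingSet G M) (x : V) :
    ∀ (n : ℕ) (N : Set (Sym2 V)), (M \ N).ncard ≤ n → IsMatchingSet G N → ExposedBy N x →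
      ∀ u, u ≠ x → ExposedBy N u → (∀ v, ExposedBy N v → v = u ∨ v = x) →
      ∃ p : G.Walk u x, p.IsPath ∧ AltList (M \ N) (N \ M) p.edges ∧ Odd p.length := by
  intro n
  induction n with
  | zero =>
    intro N hn hN hNx u hux hNu hexp
    exfalso
    obtain ⟨e, ⟨heM, hue⟩, -⟩ := hM.2 u
    have heN : e ∉ N := fun h => hNu e h hue
    have : e ∈ M \ N := ⟨heM, heN⟩
    rw [Nat.le_zero] at hn
    rw [Set.ncard_eq_zero (Set.toFinite _)] at hn
    rw [hn] at this
    exact this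
  | succ n IH =>
    intro N hn hN hNx u hux hNu hexp
    obtain ⟨e, ⟨heM, hue⟩, huniq⟩ := hM.2 u
    obtain ⟨v₁, hv₁u, rfl, hadj⟩ := other_endpoint (hM.1 heM) hue
    have heN : s(u, v₁) ∉ N := fun h => hNu _ h hue
    have heD : s(u, v₁) ∈ M \ N := ⟨heM, heN⟩
    by_cases hv₁x : v₁ = x
    · subst hv₁x
      refine ⟨Walk.cons hadj Walk.nil, ?_, ?_, ?_⟩
      · exact (Walk.cons_isPath_iff _ _).mpr ⟨Walk.IsPath.nil, by simpa using hux⟩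
      · simpa [Walk.edges_cons] using altList_single (B := N \ M) heD
      · simp [Nat.odd_iff]
    · have hv₁exp : ¬ ExposedBy N v₁ := fun h => by
        rcases hexp v₁ h with h' | h'
        · exact hv₁u h'
        · exact hv₁x h'
      rw [ExposedBy] at hv₁exp
      push_neg at hv₁exp
      obtain ⟨f, hfN, hv₁f⟩ := hv₁exp
      have hfM : f ∉ M := fun h => by
        have := (perfect_isMatching hM).2 v₁ _ heM f h (by simp) hv₁f
        rw [← this] at hfN
        exact heN hfN
      obtain ⟨v₂, hv₂v₁, rfl, hadj₂⟩ := other_endpoint (hN.1 hfN) hv₁f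
      have hv₂x : v₂ ≠ x := fun h => hNx _ hfN (by rw [← h]; simp)
      have hv₂u : v₂ ≠ u := fun h => hNu _ hfN (by rw [← h]; simp)
      set N₂ : Set (Sym2 V) := insert s(u, v₁) (N \ {s(v₁, v₂)}) with hN₂def
      have heN₂ : s(u, v₁) ∈ N₂ := Set.mem_insert _ _
      have hfN₂ : s(v₁, v₂) ∉ N₂ := by
        intro h
        rcases Set.mem_insert_iff.mp h with h' | h'
        · rcases Sym2.eq_iff.mp h' with ⟨-, h2⟩ | ⟨-, h2⟩
          · exact hv₂v₁ h2
          · exact hv₂u h2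
        · exact h'.2 rfl
      have hN₂ : IsMatchingSet G N₂ := by
        constructor
        · intro g hg
          rcases Set.mem_insert_iff.mp hg with rfl | hg'
          · exact hM.1 heM
          · exact hN.1 hg'.1
        · intro w g hg g' hg' hwg hwg'
          rcases Set.mem_insert_iff.mp hg with rfl | hg2 <;>
            rcases Set.mem_insert_iff.mp hg' with rfl | hg2'
          · rfl
          · exfalso
            rcases Sym2.mem_iff.mp hwg with rfl | rfl
            · exact hNu _ hg2'.1 hwg'
            · have := hN.2 w _ hfN _ hg2'.1 hv₁f hwg'
              exact hg2'.2 this.symm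
          · exfalso
            rcases Sym2.mem_iff.mp hwg' with rfl | rfl
            · exact hNu _ hg2.1 hwg
            · have := hN.2 w _ hfN _ hg2.1 hv₁f hwg
              exact hg2.2 this.symm
          · exact hN.2 w _ hg2.1 _ hg2'.1 hwg hwg'
      have hN₂x : ExposedBy N₂ x := by
        intro g hg hxg
        rcases Set.mem_insert_iff.mp hg with rfl | hg'
        · rcases Sym2.mem_iff.mp hxg with rfl | rfl
          · exact hux rfl
          · exact hv₁x rfl
        · exact hNx g hg'.1 hxg
      have hN₂v₂ : ExposedBy N₂ v₂ := by
        intro g hg hv₂g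
        rcases Set.mem_insert_iff.mp hg with rfl | hg'
        · rcases Sym2.mem_iff.mp hv₂g with rfl | rfl
          · exact hv₂u rfl
          · exact hv₂v₁ rfl
        · have := hN.2 v₂ _ hfN _ hg'.1 (by simp) hv₂g
          exact hg'.2 this.symm
      have hexp₂ : ∀ w, ExposedBy N₂ w → w = v₂ ∨ w = x := by
        intro w hw
        by_cases hwN : ExposedBy N w
        · rcases hexp w hwN with rfl | rfl
          · exact absurd hue (hw _ heN₂)
          · exact Or.inr rfl
        · rw [ExposedBy] at hwN
          push_neg at hwN
          obtain ⟨g, hgN, hwg⟩ := hwN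
          have hgf : g = s(v₁, v₂) := by
            by_contra hne
            exact hw g (Set.mem_insert_of_mem _ ⟨hgN, hne⟩) hwg
          subst hgf
          rcases Sym2.mem_iff.mp hwg with rfl | rfl
          · exact absurd (by simp : w ∈ s(u, w)) (hw _ heN₂)
          · exact Or.inl rfl
      have hdiff : M \ N₂ = (M \ N) \ {s(u, v₁)} := by
        ext g
        constructor
        · rintro ⟨hgM, hgN₂⟩
          have hge : g ≠ s(u, v₁) := fun h => hgN₂ (h ▸ heN₂)
          refine ⟨⟨hgM, fun hgN => ?_⟩, hge⟩
          have hgf : g ≠ s(v₁, v₂) := fun h => hfM (h ▸ hgM)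
          exact hgN₂ (Set.mem_insert_of_mem _ ⟨hgN, hgf⟩)
        · rintro ⟨⟨hgM, hgN⟩, hge⟩
          refine ⟨hgM, fun h => ?_⟩
          rcases Set.mem_insert_iff.mp h with h' | h'
          · exact hge h'
          · exact hgN h'.1
      have hcard : (M \ N₂).ncard ≤ n := by
        rw [hdiff]
        have := Set.ncard_diff_singleton_add_one heD (Set.toFinite _)
        omega
      obtain ⟨p', hp', halt', hodd'⟩ := IH N₂ hcard hN₂ hN₂x v₂ hv₂x hN₂v₂ hexp₂
      have hep' : s(u, v₁) ∉ p'.edges := by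
        intro h
        rcases altList_mem _ _ _ halt' _ h with ⟨-, h'⟩ | ⟨-, h'⟩
        · exact h' heN₂
        · exact h' heM
      have hcover := sat_cover (M := M) hv₂x (altList_isAltWalk halt')
        (fun g hg => (altList_head _ _ _ halt' g hg).1)
        (fun g hg => by
          rcases altList_mem _ _ _ halt' g (mem_of_getLast?' hg) with h' | h'
          · exact h'.1
          · exact absurd (hN₂x g h'.1 (last_edge_mem hg)).elim id)
      have hus : u ∉ p'.support := by
        intro hus
        obtain ⟨g, hg, hgM, hug⟩ := hcover u hus
        have : g = s(u, v₁) := huniq g ⟨hgM, hug⟩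
        exact hep' (this ▸ hg)
      have hv₁s : v₁ ∉ p'.support := by
        intro hv₁s
        obtain ⟨g, hg, hgM, hv₁g⟩ := hcover v₁ hv₁s
        have : g = s(u, v₁) := (perfect_isMatching hM).2 v₁ g hgM _ heM hv₁g (by simp)
        exact hep' (this ▸ hg)
      refine ⟨Walk.cons hadj (Walk.cons hadj₂ p'), ?_, ?_, ?_⟩
      · rw [Walk.cons_isPath_iff, Walk.cons_isPath_iff]
        refine ⟨⟨hp', hv₁s⟩, ?_⟩
        rw [Walk.support_cons, List.mem_cons]
        push_neg
        exact ⟨fun h => hv₁u h.symm, hus⟩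
      · rw [Walk.edges_cons, Walk.edges_cons]
        refine altList_cons heD (altList_cons ⟨hfN, hfM⟩ ?_)
        refine altList_mono _ _ _ _ ?_ ?_ _ halt'
        · rw [hdiff]; exact Set.diff_subset
        · intro g hg
          rcases Set.mem_insert_iff.mp hg.1 with rfl | h'
          · exact absurd heM hg.2
          · exact ⟨h'.1, hg.2⟩
      · obtain ⟨k, hk⟩ := hodd'
        exact ⟨k + 1, by simp [Walk.length_cons]; omega⟩


lemma path_edges_share {G : SimpleGraph V} {M : Set (Sym2 V)} :
    ∀ {a b : V} (p : G.Walk a b), p.IsPath → IsAltWalk M p →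
      ∀ g ∈ p.edges, ∀ g' ∈ p.edges, g ≠ g' → ∀ v, v ∈ g → v ∈ g' → (g ∈ M ↔ g' ∉ M)
  | a, _, Walk.nil, _, _, g, hg, g', hg', hne, v, hvg, hvg' => by simp at hg
  | a, b, @Walk.cons _ _ _ c _ h q, hp, halt, g, hg, g', hg', hne, v, hvg, hvg' => by
    simp only [IsAltWalk, Walk.edges_cons] at halt
    rw [Walk.edges_cons, List.mem_cons] at hg hg'
    obtain ⟨hq, has⟩ := (Walk.cons_isPath_iff h q).mp hp
    have key : ∀ g'', g'' ∈ q.edges → v ∈ s(a, c) → v ∈ g'' → (s(a, c) ∈ M ↔ g'' ∉ M) := by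
      intro g'' hg'' hv1 hv2
      have hvc : v = c := by
        rcases Sym2.mem_iff.mp hv1 with rfl | rfl
        · exact absurd (mem_support_of_mem_edges'_s3 hg'' hv2) has
        · rfl
      subst hvc
      exact (List.isChain_cons.mp halt).1 g'' (head_edge_of_start hq hg'' hv2)
    rcases hg with rfl | hg2 <;> rcases hg' with rfl | hg2'
    · exact absurd rfl hne
    · exact key g' hg2' hvg hvg'
    · have := key g hg2 hvg' hvg
      tauto
    · exact path_edges_share q hq halt.tail g hg2 g' hg2' hne v hvg hvg'

lemma isPath_concat {G : SimpleGraph V} {a b c : V} {p : G.Walk a b} (hp : p.IsPath)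
    (h : G.Adj b c) (hc : c ∉ p.support) : (p.concat h).IsPath := by
  have h2 : (p.concat h).reverse.IsPath := by
    rw [Walk.reverse_concat]
    exact (Walk.cons_isPath_iff _ _).mpr ⟨hp.reverse, by
      rwa [Walk.support_reverse, List.mem_reverse]⟩
  have := h2.reverse
  rwa [Walk.reverse_reverse] at this

lemma lift_matching {G : SimpleGraph V} {S : Set V} {N : Set (Sym2 S)}
    (hN : IsMatchingSet (G.induce S) N) :
    IsMatchingSet G (Sym2.map Subtype.val '' N) := by
  constructor
  · rintro e ⟨f, hf, rfl⟩
    obtain ⟨a, b, rfl⟩ := sym2_exists f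
    have : (G.induce S).Adj a b := (SimpleGraph.mem_edgeSet _).mp (hN.1 hf)
    rw [Sym2.map_pair_eq, SimpleGraph.mem_edgeSet]
    exact this
  · rintro v e ⟨e', he', rfl⟩ f ⟨f', hf', rfl⟩ hve hvf
    obtain ⟨a, ha, rfl⟩ := Sym2.mem_map.mp hve
    obtain ⟨b, hb, hba⟩ := Sym2.mem_map.mp hvf
    have hab : b = a := Subtype.val_injective hba
    subst hab
    rw [hN.2 b e' he' f' hf' ha hb]

lemma lift_ncard {S : Set V} (N : Set (Sym2 S)) :
    (Sym2.map (Subtype.val : S → V) '' N).ncard = N.ncard :=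
  Set.ncard_image_of_injective _ (Sym2.map.injective Subtype.val_injective)

lemma lift_exposed_out {S : Set V} {N : Set (Sym2 S)} {v : V} (hv : v ∉ S) :
    ExposedBy (Sym2.map Subtype.val '' N) v := by
  rintro e ⟨f, hf, rfl⟩ hve
  obtain ⟨a, ha, rfl⟩ := Sym2.mem_map.mp hve
  exact hv a.2

lemma lift_exposed_iff {S : Set V} {N : Set (Sym2 S)} {u : S} :
    ExposedBy (Sym2.map Subtype.val '' N) u.val ↔ ExposedBy N u := by
  constructor
  · intro h e he hue
    exact h _ ⟨e, he, rfl⟩ (Sym2.mem_map.mpr ⟨u, hue, rfl⟩)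
  · rintro h e ⟨f, hf, rfl⟩ hue
    obtain ⟨a, ha, hav⟩ := Sym2.mem_map.mp hue
    have : a = u := Subtype.val_injective hav
    subst this
    exact h f hf ha

lemma restrict_matching {G : SimpleGraph V} {x : V} {N₀ : Set (Sym2 V)}
    (hN₀ : IsMatchingSet G N₀) (hx : ExposedBy N₀ x) :
    ∃ N : Set (Sym2 ({x}ᶜ : Set V)), IsMatchingSet (G.induce ({x}ᶜ : Set V)) N ∧
      Sym2.map Subtype.val '' N = N₀ := by
  refine ⟨{e | Sym2.map Subtype.val e ∈ N₀}, ⟨?_, ?_⟩, ?_⟩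
  · intro e he
    obtain ⟨a, b, rfl⟩ := sym2_exists e
    rw [Set.mem_setOf_eq, Sym2.map_pair_eq] at he
    have : G.Adj ↑a ↑b := (SimpleGraph.mem_edgeSet _).mp (hN₀.1 he)
    rw [SimpleGraph.mem_edgeSet]
    exact this
  · intro v e he f hf hve hvf
    refine Sym2.map.injective Subtype.val_injective ?_
    exact hN₀.2 v.val _ he _ hf (Sym2.mem_map.mpr ⟨v, hve, rfl⟩)
      (Sym2.mem_map.mpr ⟨v, hvf, rfl⟩)
  · ext g
    constructor
    · rintro ⟨f, hf, rfl⟩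
      exact hf
    · intro hg
      obtain ⟨c, d, rfl⟩ := sym2_exists g
      have hc : c ∈ ({x}ᶜ : Set V) := fun h => hx _ hg (by rw [Set.mem_singleton_iff] at h; rw [h]; simp)
      have hd : d ∈ ({x}ᶜ : Set V) := fun h => hx _ hg (by rw [Set.mem_singleton_iff] at h; rw [h]; simp)
      exact ⟨s(⟨c, hc⟩, ⟨d, hd⟩), by rwa [Set.mem_setOf_eq, Sym2.map_pair_eq],
        by rw [Sym2.map_pair_eq]⟩

lemma perfect_card [Finite V] {G : SimpleGraph V} {M : Set (Sym2 V)}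
    (hM : IsPerfectMatchingSet G M) : Nat.card V = 2 * M.ncard := by
  have hsupp : suppOf M = Set.univ := by
    ext v
    simp only [Set.mem_univ, iff_true]
    obtain ⟨e, ⟨he, hv⟩, -⟩ := hM.2 v
    exact ⟨e, he, hv⟩
  rw [← Set.ncard_univ, ← hsupp, matching_support_ncard (perfect_isMatching hM)]

lemma card_compl_singleton [Finite V] (x : V) :
    Nat.card ({x}ᶜ : Set V) = Nat.card V - 1 := by
  rw [Nat.card_coe_set_eq, Set.compl_eq_univ_diff, Set.ncard_diff (Set.subset_univ _),
    Set.ncard_univ, Set.ncard_singleton]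

lemma h_matching_bound [Finite V] {G : SimpleGraph V} {M : Set (Sym2 V)}
    (hM : IsPerfectMatchingSet G M) (x : V) {N : Set (Sym2 ({x}ᶜ : Set V))}
    (hN : IsMatchingSet (G.induce ({x}ᶜ : Set V)) N) : N.ncard ≤ M.ncard - 1 := by
  have h1 := matching_ncard_le hN
  have h2 := perfect_card hM
  have : Nonempty V := ⟨x⟩
  have h4 : 0 < Nat.card V := Nat.card_pos
  rw [card_compl_singleton (V := V) x] at h1
  omega

lemma L1 [Finite V] {G : SimpleGraph V} {M : Set (Sym2 V)}
    (hM : IsPerfectMatchingSet G M) {x u : V} (hux : u ≠ x) {p : G.Walk u x}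
    (hp : IsSaturatedPath M p) (hu : u ∈ ({x}ᶜ : Set V)) :
    (⟨u, hu⟩ : ({x}ᶜ : Set V)) ∈ Dset (G.induce ({x}ᶜ : Set V)) := by
  classical
  obtain ⟨hpath, hodd, halt, hhead⟩ := hp
  set pE : Set (Sym2 V) := {e | e ∈ p.edges} with hpEdef
  have hen : p.edges ≠ [] := edges_ne_nil_of_ne hux
  obtain ⟨e₀, he₀⟩ : ∃ e, p.edges.head? = some e :=
    Option.isSome_iff_exists.mp (by rwa [List.isSome_head?])
  obtain ⟨e₁, he₁⟩ : ∃ e, p.edges.getLast? = some e :=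
    Option.isSome_iff_exists.mp (by rwa [List.getLast?_isSome])
  have he₀M : e₀ ∈ M := hhead e₀ he₀
  have he₁M : e₁ ∈ M := by
    have hpar := alt_parity halt he₀ he₁
    rw [Walk.length_edges] at hpar
    exact (hpar.mpr hodd).mp he₀M
  have hlast : ∀ e, p.edges.getLast? = some e → e ∈ M := by
    intro e he
    rw [he₁] at he
    exact Option.some_inj.mp he ▸ he₁M
  have hcover := sat_cover hux halt hhead hlast
  set N₀ : Set (Sym2 V) := (M \ pE) ∪ (pE \ M) with hN₀def
  have hMm := perfect_isMatching hM
  have hshare := path_edges_share p hpath halt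
  have hN₀ : IsMatchingSet G N₀ := by
    constructor
    · rintro g (⟨hg, -⟩ | ⟨hg, -⟩)
      · exact hM.1 hg
      · exact p.edges_subset_edgeSet hg
    · rintro v g (⟨hgM, hgE⟩ | ⟨hgE, hgM⟩) g' (⟨hgM', hgE'⟩ | ⟨hgE', hgM'⟩) hvg hvg'
      · exact hMm.2 v g hgM g' hgM' hvg hvg'
      · exfalso
        obtain ⟨hh, hhE, hhM, hvh⟩ := hcover v (mem_support_of_mem_edges'_s3 hgE' hvg')
        exact hgE (by rw [hMm.2 v g hgM hh hhM hvg hvh]; exact hhE)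
      · exfalso
        obtain ⟨hh, hhE, hhM, hvh⟩ := hcover v (mem_support_of_mem_edges'_s3 hgE hvg)
        exact hgE' (by rw [hMm.2 v g' hgM' hh hhM hvg' hvh]; exact hhE)
      · by_contra hne
        have := hshare g hgE g' hgE' hne v hvg hvg'
        tauto
  have hux' : ExposedBy N₀ u := by
    rintro g (⟨hgM, hgE⟩ | ⟨hgE, hgM⟩) hug
    · obtain ⟨hh, hhE, hhM, huh⟩ := hcover u p.start_mem_support
      exact hgE (by rw [hMm.2 u g hgM hh hhM hug huh]; exact hhE)
    · have h2 := head_edge_of_start hpath hgE hug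
      rw [he₀] at h2
      exact hgM (Option.some_inj.mp h2 ▸ he₀M)
  have hxx : ExposedBy N₀ x := by
    rintro g (⟨hgM, hgE⟩ | ⟨hgE, hgM⟩) hxg
    · obtain ⟨hh, hhE, hhM, hxh⟩ := hcover x p.end_mem_support
      exact hgE (by rw [hMm.2 x g hgM hh hhM hxg hxh]; exact hhE)
    · have hrev : g ∈ p.reverse.edges := by
        rw [Walk.edges_reverse, List.mem_reverse]; exact hgE
      have h2 := head_edge_of_start hpath.reverse hrev hxg
      rw [Walk.edges_reverse, List.head?_reverse, he₁] at h2
      exact hgM (Option.some_inj.mp h2 ▸ he₁M)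
  have hsupp : suppOf N₀ = Set.univ \ {u, x} := by
    ext v
    simp only [suppOf, Set.mem_setOf_eq, Set.mem_diff, Set.mem_univ, true_and,
      Set.mem_insert_iff, Set.mem_singleton_iff]
    constructor
    · rintro ⟨g, hg, hvg⟩
      push_neg
      constructor
      · rintro rfl; exact hux' g hg hvg
      · rintro rfl; exact hxx g hg hvg
    · intro hv
      push_neg at hv
      by_cases hvs : v ∈ p.support
      · obtain ⟨e, f, he, hf, hef, hve, hvf⟩ := two_edges_of_interior p hpath v hvs hv.1 hv.2
        by_cases heM : e ∈ M
        · by_cases hfM : f ∈ M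
          · exact absurd (hMm.2 v e heM f hfM hve hvf) hef
          · exact ⟨f, Or.inr ⟨hf, hfM⟩, hvf⟩
        · exact ⟨e, Or.inr ⟨he, heM⟩, hve⟩
      · obtain ⟨g, ⟨hgM, hvg⟩, -⟩ := hM.2 v
        exact ⟨g, Or.inl ⟨hgM, fun hgE => hvs (mem_support_of_mem_edges'_s3 hgE hvg)⟩, hvg⟩
  have hN₀card : 2 * N₀.ncard = Nat.card V - 2 := by
    rw [← matching_support_ncard hN₀, hsupp, Set.ncard_diff (Set.subset_univ _),
      Set.ncard_univ, Set.ncard_pair hux]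
  obtain ⟨N, hNmatch, hNim⟩ := restrict_matching hN₀ hxx
  have hNcard : N.ncard = N₀.ncard := by rw [← hNim, lift_ncard]
  have hcV := perfect_card hM
  have : Nonempty V := ⟨x⟩
  have hVpos : 0 < Nat.card V := Nat.card_pos
  refine ⟨N, ⟨hNmatch, ?_⟩, ?_⟩
  · intro N' hN'
    have := h_matching_bound hM x hN'
    omega
  · exact lift_exposed_iff.mp (by rw [hNim]; exact hux')

lemma L2 [Finite V] {G : SimpleGraph V} {M : Set (Sym2 V)}
    (hM : IsPerfectMatchingSet G M) {x u : V} (hux : u ≠ x) (hu : u ∈ ({x}ᶜ : Set V))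
    (hD : (⟨u, hu⟩ : ({x}ᶜ : Set V)) ∈ Dset (G.induce ({x}ᶜ : Set V))) :
    ∃ p : G.Walk u x, IsSaturatedPath M p := by
  classical
  obtain ⟨NH, ⟨hNHm, hNHmax⟩, hNHexp⟩ := hD
  set N₁ := Sym2.map Subtype.val '' NH with hN₁def
  have hN₁m : IsMatchingSet G N₁ := lift_matching hNHm
  have hN₁x : ExposedBy N₁ x := lift_exposed_out (by simp)
  have hN₁u : ExposedBy N₁ u := lift_exposed_iff.mpr hNHexp
  obtain ⟨ex, ⟨hexM, hxex⟩, hexuniq⟩ := hM.2 x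
  have hMm := perfect_isMatching hM
  have hM' : IsMatchingSet G (M \ {ex}) :=
    ⟨fun g hg => hM.1 hg.1, fun v g hg g' hg' hvg hvg' => hMm.2 v g hg.1 g' hg'.1 hvg hvg'⟩
  have hM'x : ExposedBy (M \ {ex}) x := by
    rintro g ⟨hgM, hge⟩ hxg
    exact hge (hexuniq g ⟨hgM, hxg⟩)
  obtain ⟨NL, hNLm, hNLim⟩ := restrict_matching hM' hM'x
  have hNLcard : NL.ncard + 1 = M.ncard := by
    have h1 : (Sym2.map Subtype.val '' NL).ncard = NL.ncard := lift_ncard NL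
    rw [hNLim] at h1
    have h2 := Set.ncard_diff_singleton_add_one hexM (Set.toFinite M)
    omega
  have hlow : NL.ncard ≤ NH.ncard := hNHmax NL hNLm
  have hhigh := h_matching_bound hM x hNHm
  have hcV := perfect_card hM
  have : Nonempty V := ⟨x⟩
  have hVpos : 0 < Nat.card V := Nat.card_pos
  have hNHcard : NH.ncard + 1 = M.ncard := by omega
  have hexp : ∀ v, ExposedBy N₁ v → v = u ∨ v = x := by
    intro v hv
    by_cases hvx : v = x
    · exact Or.inr hvx
    · left
      by_contra hvu
      have hvS : v ∈ ({x}ᶜ : Set V) := hvx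
      have hvexp : ExposedBy NH ⟨v, hvS⟩ := lift_exposed_iff.mp hv
      have hsub : suppOf NH ⊆ Set.univ \ {(⟨u, hu⟩ : ({x}ᶜ : Set V)), ⟨v, hvS⟩} := by
        rintro w ⟨g, hg, hwg⟩
        refine ⟨Set.mem_univ _, ?_⟩
        intro hw
        simp only [Set.mem_insert_iff, Set.mem_singleton_iff] at hw
        rcases hw with rfl | rfl
        · exact hNHexp g hg hwg
        · exact hvexp g hg hwg
      have hle := Set.ncard_le_ncard hsub (Set.toFinite _)
      have hne : (⟨u, hu⟩ : ({x}ᶜ : Set V)) ≠ ⟨v, hvS⟩ := by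
        intro h
        exact hvu (congrArg Subtype.val h).symm
      rw [matching_support_ncard hNHm, Set.ncard_diff (Set.subset_univ _), Set.ncard_univ,
        Set.ncard_pair hne] at hle
      have hcS : Nat.card ({x}ᶜ : Set V) = Nat.card V - 1 := card_compl_singleton x
      rw [hcS] at hle
      have hnt : Nontrivial ({x}ᶜ : Set V) := ⟨⟨⟨u, hu⟩, ⟨v, hvS⟩, hne⟩⟩
      have h2le : 1 < Nat.card ({x}ᶜ : Set V) := Finite.one_lt_card_iff_nontrivial.mpr hnt
      rw [hcS] at h2le
      omega
  obtain ⟨p, hpath, haltL, hodd⟩ :=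
    greedy hM x ((M \ N₁).ncard) N₁ le_rfl hN₁m hN₁x u hux hN₁u hexp
  exact ⟨p, hpath, hodd, altList_isAltWalk haltL,
    fun e he => (altList_head _ _ _ haltL e he).1⟩

lemma L3 [Finite V] {G : SimpleGraph V} {M : Set (Sym2 V)}
    (hM : IsPerfectMatchingSet G M) {x u : V} (hux : u ≠ x) (hu : u ∈ ({x}ᶜ : Set V))
    (hA : (⟨u, hu⟩ : ({x}ᶜ : Set V)) ∈ Aset (G.induce ({x}ᶜ : Set V))) :
    (∃ p : G.Walk u x, IsSaturatedPath M p) ∨ (∃ q : G.Walk x u, IsBalancedPath M q) := by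
  classical
  obtain ⟨-, w, hwD, hadj⟩ := hA
  have hwx : (w : V) ≠ x := w.2
  have hadjG : G.Adj ↑w u := hadj
  obtain ⟨p, hpath, hodd, halt, hhead⟩ := L2 hM hwx w.2 hwD
  have hen : p.edges ≠ [] := edges_ne_nil_of_ne hwx
  obtain ⟨e₀, he₀⟩ : ∃ e, p.edges.head? = some e :=
    Option.isSome_iff_exists.mp (by rwa [List.isSome_head?])
  obtain ⟨e₁, he₁⟩ : ∃ e, p.edges.getLast? = some e :=
    Option.isSome_iff_exists.mp (by rwa [List.getLast?_isSome])
  have he₀M : e₀ ∈ M := hhead e₀ he₀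
  have he₁M : e₁ ∈ M := by
    have hpar := alt_parity halt he₀ he₁
    rw [Walk.length_edges] at hpar
    exact (hpar.mpr hodd).mp he₀M
  by_cases hus : u ∈ p.support
  · set q₀ := p.dropUntil u hus with hq₀def
    have hq₀path : q₀.IsPath := hpath.dropUntil hus
    have hedges : p.edges = (p.takeUntil u hus).edges ++ q₀.edges := by
      rw [hq₀def, ← Walk.edges_append, Walk.take_spec]
    have hq₀alt : IsAltWalk M q₀ := by
      have h2 : List.Chain' (fun e f => e ∈ M ↔ f ∉ M) p.edges := halt
      rw [hedges] at h2
      exact (List.isChain_append.mp h2).2.1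
    have hq₀en : q₀.edges ≠ [] := edges_ne_nil_of_ne hux
    obtain ⟨f₀, hf₀⟩ : ∃ f, q₀.edges.head? = some f :=
      Option.isSome_iff_exists.mp (by rwa [List.isSome_head?])
    have hf₁ : q₀.edges.getLast? = some e₁ := by
      rw [hedges, List.getLast?_append_of_ne_nil _ hq₀en] at he₁
      exact he₁
    have hparity := alt_parity hq₀alt hf₀ hf₁
    rw [Walk.length_edges] at hparity
    by_cases hf₀M : f₀ ∈ M
    · left
      exact ⟨q₀, hq₀path, hparity.mp (iff_of_true hf₀M he₁M), hq₀alt,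
        fun e he => by rw [hf₀] at he; exact Option.some_inj.mp he ▸ hf₀M⟩
    · right
      refine ⟨q₀.reverse, hq₀path.reverse, ?_, isAltWalk_reverse hq₀alt, ?_⟩
      · rw [Walk.length_reverse]
        have hno : ¬ Odd q₀.length := fun h => hf₀M ((hparity.mpr h).mpr he₁M)
        exact Nat.not_odd_iff_even.mp hno
      · intro e he
        rw [Walk.edges_reverse, List.head?_reverse, hf₁] at he
        exact Option.some_inj.mp he ▸ he₁M
  · right
    refine ⟨p.reverse.concat hadjG, ?_, ?_, ?_, ?_⟩
    · exact isPath_concat hpath.reverse hadjG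
        (by rw [Walk.support_reverse, List.mem_reverse]; exact hus)
    · rw [Walk.length_concat, Walk.length_reverse]
      exact hodd.add_one
    · show List.Chain' (fun e f => e ∈ M ↔ f ∉ M) (p.reverse.concat hadjG).edges
      rw [Walk.edges_concat, List.concat_eq_append]
      refine List.isChain_append.mpr ⟨isAltWalk_reverse halt, List.isChain_singleton _, ?_⟩
      intro y hy z hz
      rw [Walk.edges_reverse, List.getLast?_reverse, he₀, Option.mem_def, Option.some_inj] at hy
      simp only [List.head?_cons, Option.mem_def, Option.some_inj] at hz
      subst hy; subst hz
      have hsw : s(↑w, u) ∉ M := by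
        intro hmem
        have hweq : e₀ = s(↑w, u) :=
          (perfect_isMatching hM).2 (↑w) e₀ he₀M _ hmem (first_edge_mem he₀) (by simp)
        have he₀mem : e₀ ∈ p.edges := List.mem_of_mem_head? (show e₀ ∈ p.edges.head? from he₀)
        have hue₀ : u ∈ e₀ := by rw [hweq]; simp
        exact hus (mem_support_of_mem_edges'_s3 he₀mem hue₀)
      exact iff_of_true he₀M hsw
    · intro e he
      rw [Walk.edges_concat, List.concat_eq_append, List.head?_append_of_ne_nil _ (by
          rw [Walk.edges_reverse]; simpa using hen),
        Walk.edges_reverse, List.head?_reverse, he₁] at he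
      exact Option.some_inj.mp he ▸ he₁M



lemma L4 [Finite V] {G : SimpleGraph V} {M : Set (Sym2 V)}
    (hM : IsPerfectMatchingSet G M) {x u : V} (hux : u ≠ x) (hu : u ∈ ({x}ᶜ : Set V))
    {q : G.Walk x u} (hq : IsBalancedPath M q) :
    (⟨u, hu⟩ : ({x}ᶜ : Set V)) ∈ Dset (G.induce ({x}ᶜ : Set V)) ∨
      (⟨u, hu⟩ : ({x}ᶜ : Set V)) ∈ Aset (G.induce ({x}ᶜ : Set V)) := by
  classical
  obtain ⟨hpath, heven, halt, hhead⟩ := hq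
  have hen : q.edges ≠ [] := edges_ne_nil_of_ne (Ne.symm hux)
  obtain ⟨e₀, he₀⟩ : ∃ e, q.edges.head? = some e :=
    Option.isSome_iff_exists.mp (by rwa [List.isSome_head?])
  obtain ⟨e₁, he₁⟩ : ∃ e, q.edges.getLast? = some e :=
    Option.isSome_iff_exists.mp (by rwa [List.getLast?_isSome])
  have he₀M : e₀ ∈ M := hhead e₀ he₀
  have he₁M : e₁ ∉ M := by
    have hpar := alt_parity halt he₀ he₁
    rw [Walk.length_edges] at hpar
    intro h
    exact (Nat.not_odd_iff_even.mpr heven) (hpar.mp (iff_of_true he₀M h))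
  have hrnil : ¬ q.reverse.Nil := by
    rw [Walk.nil_iff_length_eq, Walk.length_reverse]
    intro h
    apply hen
    rw [← List.length_eq_zero_iff, Walk.length_edges]
    exact h
  obtain ⟨w, hadj, r', hr⟩ := Walk.not_nil_iff.mp hrnil
  have hrpath : (Walk.cons hadj r').IsPath := hr ▸ hpath.reverse
  obtain ⟨hr'path, hur'⟩ := (Walk.cons_isPath_iff hadj r').mp hrpath
  have hredges : q.reverse.edges = s(u, w) :: r'.edges := by rw [hr, Walk.edges_cons]
  have hrev : q.reverse.edges = q.edges.reverse := Walk.edges_reverse q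
  have huw : s(u, w) = e₁ := by
    have : q.reverse.edges.head? = some e₁ := by rw [hrev, List.head?_reverse]; exact he₁
    rw [hredges, List.head?_cons, Option.some_inj] at this
    exact this
  have hraltfull : IsAltWalk M q.reverse := isAltWalk_reverse halt
  have hr'alt : IsAltWalk M r' := by
    have h2 : List.Chain' (fun e f => e ∈ M ↔ f ∉ M) (s(u, w) :: r'.edges) := by
      rw [← hredges]; exact hraltfull
    exact h2.tail
  have hr'len : r'.length + 1 = q.length := by
    have := Walk.length_reverse q
    rw [hr, Walk.length_cons] at this
    omega
  have hr'odd : Odd r'.length := by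
    rcases heven with ⟨k, hk⟩
    exact ⟨k - 1, by omega⟩
  have hwx : w ≠ x := by
    rintro rfl
    have : r' = Walk.nil := (Walk.isPath_iff_eq_nil (p := r')).mp hr'path
    rw [this] at hr'odd
    simp [Nat.odd_iff] at hr'odd
  have hr'en : r'.edges ≠ [] := edges_ne_nil_of_ne hwx
  have hr'head : ∀ e, r'.edges.head? = some e → e ∈ M := by
    intro e he
    have hchain : List.Chain' (fun e f => e ∈ M ↔ f ∉ M) (s(u, w) :: r'.edges) := by
      rw [← hredges]; exact hraltfull
    have := (List.isChain_cons.mp hchain).1 e he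
    rw [huw] at this
    by_contra hne
    exact he₁M (this.mpr hne)
  have hr'sat : IsSaturatedPath M r' := ⟨hr'path, hr'odd, hr'alt, hr'head⟩
  have hwS : w ∈ ({x}ᶜ : Set V) := hwx
  have hwD : (⟨w, hwS⟩ : ({x}ᶜ : Set V)) ∈ Dset (G.induce ({x}ᶜ : Set V)) :=
    L1 hM hwx hr'sat hwS
  by_cases hD : (⟨u, hu⟩ : ({x}ᶜ : Set V)) ∈ Dset (G.induce ({x}ᶜ : Set V))
  · exact Or.inl hD
  · refine Or.inr ⟨hD, ⟨w, hwS⟩, hwD, ?_⟩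
    exact hadj.symm

end Lemmas

theorem stmt3 [Finite V] (G : SimpleGraph V) (M : Set (Sym2 V))
    (hM : IsPerfectMatchingSet G M) (x u : V) (hu : u ∈ ({x}ᶜ : Set V)) :
    (⟨u, hu⟩ : ({x}ᶜ : Set V)) ∈ Cset (G.induce ({x}ᶜ : Set V)) ↔
      (∀ p : G.Walk u x, ¬ IsSaturatedPath M p) ∧
        ∀ q : G.Walk x u, ¬ IsBalancedPath M q := by
  have hux : u ≠ x := hu
  constructor
  · rintro ⟨hD, hA⟩
    constructor
    · intro p hp
      exact hD (L1 hM hux hp hu)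
    · intro q hq
      rcases L4 hM hux hu hq with h | h
      · exact hD h
      · exact hA h
  · rintro ⟨hsat, hbal⟩
    constructor
    · intro hD
      obtain ⟨p, hp⟩ := L2 hM hux hu hD
      exact hsat p hp
    · intro hA
      rcases L3 hM hux hu hA with ⟨p, hp⟩ | ⟨q, hq⟩
      · exact hsat p hp
      · exact hbal q hq
end

section
/- Let G be a factorizable graph and X ⊆ V(G). Then X is separating if and only if for every perfect matching M of G, M contains a perfect matching of G[X] (equivalently, every matching edge with an endpoint in X has both endpoints in X). -/
open SimpleGraph

variable {V : Type*}

theorem stmt5 [Finite V] (G : SimpleGraph V) (hG : Factorizable G) (X : Set V) :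
    IsSeparating G X ↔
      ∀ M, IsPerfectMatchingSet G M →
        ∀ e ∈ M, ∀ a b : V, e = s(a, b) → a ∈ X → b ∈ X := by
  constructor
  · intro hsep M hM e heM a b hab haX
    have hne : a ≠ b := by
      intro h; subst h
      have := hM.1 heM
      rw [hab, SimpleGraph.mem_edgeSet] at this
      exact G.irrefl this
    have hadj : (SimpleGraph.fromEdgeSet (allowedEdges G)).Adj a b :=
      (SimpleGraph.fromEdgeSet_adj _).mpr ⟨⟨M, hM, hab ▸ heM⟩, hne⟩
    exact (hsep a b hadj.reachable).mp haX
  · intro h u v huv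
    refine huv.elim fun p => ?_
    clear huv
    induction p with
    | nil => exact Iff.rfl
    | @cons u w v hadj p ih =>
      refine Iff.trans ?_ ih
      obtain ⟨⟨M, hM, hmem⟩, hne⟩ := (SimpleGraph.fromEdgeSet_adj _).mp hadj
      exact ⟨fun hu => h M hM _ hmem u w rfl hu,
             fun hw => h M hM _ hmem w u (Sym2.eq_swap) hw⟩
end

section
/- Let G be a factorizable graph and H a factor-connected component of G. If u, v ∈ V(H) and G − u − v is not factorizable (or u = v), then H − u − v is not factorizable (or u = v); i.e., the partition of V(H) induced by the relation ∼_G restricted to H refines the partition induced by ∼_H. -/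
open SimpleGraph

variable {V : Type*}

lemma mem_induce_edgeSet_of_map {t : Set V} {G : SimpleGraph V} {e : Sym2 t}
    (he : Sym2.map Subtype.val e ∈ G.edgeSet) : e ∈ (G.induce t).edgeSet := by
  induction e with
  | _ a b =>
    rw [Sym2.map_pair_eq] at he
    exact he

lemma incl_map_mem_induce {s t : Set V} (hst : s ⊆ t) {G : SimpleGraph V} {e : Sym2 s}
    (he : e ∈ (G.induce s).edgeSet) : Sym2.map (Set.inclusion hst) e ∈ (G.induce t).edgeSet := by
  induction e with
  | _ a b =>
    rw [Sym2.map_pair_eq]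
    exact he

lemma sameFC_of_mem_pm {G : SimpleGraph V} {M : Set (Sym2 V)}
    (hM : IsPerfectMatchingSet G M) {a b : V} (h : s(a, b) ∈ M) : SameFC G a b := by
  have hab : G.Adj a b := (SimpleGraph.mem_edgeSet G).mp (hM.1 h)
  exact SimpleGraph.Adj.reachable (by
    rw [SimpleGraph.fromEdgeSet_adj]
    exact ⟨⟨M, hM, h⟩, hab.ne⟩)

theorem stmt6 [Finite V] (G : SimpleGraph V) (hG : Factorizable G) (u v : V)
    (hfc : SameFC G u v) (hne : u ≠ v)
    (h : ¬ Factorizable (G.induce ({u, v}ᶜ : Set V))) :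
    ¬ Factorizable (G.induce ({w | SameFC G u w} \ {u, v})) := by
  intro hF
  apply h
  set S : Set V := {w | SameFC G u w} with hS
  obtain ⟨M, hM⟩ := hG
  obtain ⟨M', hM'⟩ := hF
  have hsub : (S \ {u, v} : Set V) ⊆ ({u, v}ᶜ : Set V) := fun x hx => hx.2
  have huS : u ∈ S := SimpleGraph.Reachable.refl u
  have hvS : v ∈ S := hfc
  refine ⟨(Sym2.map (Set.inclusion hsub)) '' M' ∪
      {e | Sym2.map Subtype.val e ∈ M ∧ ∀ x ∈ e, (x : V) ∉ S}, ?_, ?_⟩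
  · rintro e (⟨f, hfM', rfl⟩ | ⟨heM, -⟩)
    · exact incl_map_mem_induce hsub (hM'.1 hfM')
    · exact mem_induce_edgeSet_of_map (hM.1 heM)
  · intro w
    by_cases hwS : (w : V) ∈ S
    · have hw' : (w : V) ∈ S \ ({u, v} : Set V) := ⟨hwS, w.2⟩
      obtain ⟨f, ⟨hfM', hwf⟩, huniq⟩ := hM'.2 ⟨(w : V), hw'⟩
      refine ⟨Sym2.map (Set.inclusion hsub) f, ⟨Or.inl ⟨f, hfM', rfl⟩, ?_⟩, ?_⟩
      · exact Sym2.mem_map.mpr ⟨⟨(w : V), hw'⟩, hwf, Subtype.ext rfl⟩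
      · rintro e ⟨(⟨g, hgM', rfl⟩ | ⟨-, hall⟩), hwe⟩
        · obtain ⟨y, hyg, hyw⟩ := Sym2.mem_map.mp hwe
          have hy : y = ⟨(w : V), hw'⟩ := Subtype.ext (by
            rw [← Set.coe_inclusion hsub, hyw])
          rw [huniq g ⟨hgM', hy ▸ hyg⟩]
        · exact absurd hwS (hall w hwe)
    · obtain ⟨e, ⟨heM, hwe⟩, huniq⟩ := hM.2 (w : V)
      obtain ⟨z, rfl⟩ := Sym2.mem_iff_exists.mp hwe
      have hwz : SameFC G (w : V) z := sameFC_of_mem_pm hM heM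
      have hzS : z ∉ S := fun hz => hwS (SimpleGraph.Reachable.trans hz hwz.symm)
      have hzT : z ∈ ({u, v}ᶜ : Set V) := by
        intro hz
        rcases hz with rfl | rfl
        · exact hzS huS
        · exact hzS hvS
      refine ⟨s(w, ⟨z, hzT⟩), ⟨Or.inr ⟨by simpa using heM, ?_⟩, Sym2.mem_mk_left _ _⟩, ?_⟩
      · intro x hx
        rcases Sym2.mem_iff.mp hx with rfl | rfl
        · exact hwS
        · exact hzS
      · rintro e' ⟨(⟨g, hgM', rfl⟩ | ⟨he'M, -⟩), hwe'⟩
        · obtain ⟨y, -, hyw⟩ := Sym2.mem_map.mp hwe'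
          have hyw' : (y : V) = (w : V) := by
            rw [← Set.coe_inclusion hsub, hyw]
          exact absurd (hyw' ▸ y.2.1 : (w : V) ∈ S) hwS
        · have hmem : (w : V) ∈ Sym2.map Subtype.val e' :=
            Sym2.mem_map.mpr ⟨w, hwe', rfl⟩
          have := huniq (Sym2.map Subtype.val e') ⟨he'M, hmem⟩
          have hgoal : Sym2.map Subtype.val e' = Sym2.map Subtype.val s(w, ⟨z, hzT⟩) := by
            simpa using this
          exact Sym2.map.injective Subtype.val_injective hgoal
end

section
/- Let G be a factorizable graph with perfect matching M, and let u, v be distinct vertices in the same factor-connected component of G. Then G − u − v is factorizable if and only if there exists an M-saturated path between u and v in G. -/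
open SimpleGraph

variable {V : Type*}

section Aux
variable {G : SimpleGraph V}

def walkOfFun (G : SimpleGraph V) : (n : ℕ) → (f : ℕ → V) →
    (∀ k, k < n → G.Adj (f k) (f (k+1))) → G.Walk (f 0) (f n)
  | 0, _, _ => Walk.nil
  | n+1, f, h => Walk.cons (h 0 (Nat.succ_pos n))
      (walkOfFun G n (fun k => f (k+1)) (fun k hk => h (k+1) (by omega)))

lemma walkOfFun_length (n : ℕ) (f : ℕ → V) (h : ∀ k, k < n → G.Adj (f k) (f (k+1))) :
    (walkOfFun G n f h).length = n := by
  induction n generalizing f with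
  | zero => rfl
  | succ n ih => simp [walkOfFun, ih]

lemma walkOfFun_support (n : ℕ) (f : ℕ → V) (h : ∀ k, k < n → G.Adj (f k) (f (k+1))) :
    (walkOfFun G n f h).support = (List.range (n+1)).map f := by
  induction n generalizing f with
  | zero => simp [walkOfFun, List.range_succ]
  | succ n ih =>
    rw [walkOfFun, Walk.support_cons, ih, List.range_succ_eq_map (n := n+1), List.map_cons,
      List.map_map]
    rfl

lemma walkOfFun_edges (n : ℕ) (f : ℕ → V) (h : ∀ k, k < n → G.Adj (f k) (f (k+1))) :
    (walkOfFun G n f h).edges = (List.range n).map (fun k => s(f k, f (k+1))) := by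
  induction n generalizing f with
  | zero => simp [walkOfFun]
  | succ n ih =>
    rw [walkOfFun, Walk.edges_cons, ih, List.range_succ_eq_map (n := n), List.map_cons,
      List.map_map]
    rfl

lemma walk_support_eq {u v : V} (p : G.Walk u v) :
    p.support = (List.range (p.length + 1)).map p.getVert := by
  induction p with
  | nil => simp [List.range_succ]
  | cons h q ih =>
    rw [Walk.support_cons, ih, Walk.length_cons]
    conv_rhs => rw [List.range_succ_eq_map]
    simp only [List.map_cons, List.map_map]
    simp [Walk.getVert_cons_succ, Function.comp_def]

lemma walk_edges_eq {u v : V} (p : G.Walk u v) :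
    p.edges = (List.range p.length).map (fun k => s(p.getVert k, p.getVert (k+1))) := by
  induction p with
  | nil => simp
  | cons h q ih =>
    rw [Walk.edges_cons, ih, Walk.length_cons]
    conv_rhs => rw [List.range_succ_eq_map]
    simp only [List.map_cons, List.map_map]
    simp [Walk.getVert_cons_succ, Function.comp_def, Walk.getVert_zero]

lemma alt_even_of_chain {M : Set (Sym2 V)} {n : ℕ} {g : ℕ → Sym2 V}
    (h0 : g 0 ∈ M) (hstep : ∀ k, k + 1 < n → (g k ∈ M ↔ g (k+1) ∉ M)) :
    ∀ k, k < n → (g k ∈ M ↔ Even k) := by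
  intro k
  induction k with
  | zero => intro _; simpa using h0
  | succ k ih =>
    intro hk
    have h1 := hstep k hk
    have h2 := ih (by omega)
    rw [Nat.even_add_one, ← h2]
    tauto

lemma satPath_iff_data (G : SimpleGraph V) (M : Set (Sym2 V)) (u v : V) :
    (∃ p : G.Walk u v, IsSaturatedPath M p) ↔
    ∃ n : ℕ, ∃ f : ℕ → V, Odd n ∧ f 0 = u ∧ f n = v ∧ Set.InjOn f (Set.Iic n) ∧
      (∀ k, k < n → G.Adj (f k) (f (k+1))) ∧
      (∀ k, k < n → (s(f k, f (k+1)) ∈ M ↔ Even k)) := by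
  constructor
  · rintro ⟨p, hpath, hodd, halt, hhead⟩
    obtain ⟨m, hm⟩ := hodd
    refine ⟨p.length, p.getVert, ⟨m, hm⟩, p.getVert_zero, p.getVert_length, ?_, ?_, ?_⟩
    · have hnd := hpath.support_nodup
      rw [walk_support_eq] at hnd
      have hinj := List.inj_on_of_nodup_map hnd
      intro i hi j hj hij
      exact hinj (List.mem_range.mpr (by simpa using Nat.lt_succ_of_le hi))
        (List.mem_range.mpr (by simpa using Nat.lt_succ_of_le hj)) hij
    · intro k hk; exact p.adj_getVert_succ hk
    · have hedges := walk_edges_eq p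
      unfold IsAltWalk at halt
      have hch : List.Chain'
          (fun a b => (fun k => s(p.getVert k, p.getVert (k+1))) a ∈ M ↔
            (fun k => s(p.getVert k, p.getVert (k+1))) b ∉ M) (List.range p.length) := by
        have h' := halt
        rw [walk_edges_eq p] at h'
        unfold List.Chain' at h' ⊢
        rw [List.isChain_map] at h'
        exact h'
      have hstep : ∀ k, k + 1 < p.length →
          (s(p.getVert k, p.getVert (k+1)) ∈ M ↔ s(p.getVert (k+1), p.getVert (k+2)) ∉ M) := by
        intro k hk
        have : List.Chain' (fun a b => s(p.getVert a, p.getVert (a+1)) ∈ M ↔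
            s(p.getVert b, p.getVert (b+1)) ∉ M) (List.range (2*m+1)) := by
          rw [← hm]; exact hch
        have := (List.isChain_range_succ _ (2*m)).mp this k (by omega)
        simpa using this
      have h0 : s(p.getVert 0, p.getVert 1) ∈ M := by
        apply hhead
        rw [walk_edges_eq, hm]
        rw [List.range_succ_eq_map, List.map_cons]
        rfl
      exact fun k hk => alt_even_of_chain h0 hstep k hk
  · rintro ⟨n, f, hodd, hu, hv, hinj, hadj, haltk⟩
    obtain ⟨m, hm⟩ := hodd
    refine ⟨(walkOfFun G n f hadj).copy hu hv, ?_, ?_, ?_, ?_⟩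
    · rw [Walk.isPath_def, Walk.support_copy, walkOfFun_support]
      apply List.Nodup.map_on _ (List.nodup_range)
      intro i hi j hj hij
      exact hinj (by simpa using Nat.lt_succ_iff.mp (List.mem_range.mp hi))
        (by simpa using Nat.lt_succ_iff.mp (List.mem_range.mp hj)) hij
    · rw [Walk.length_copy, walkOfFun_length]; exact ⟨m, hm⟩
    · unfold IsAltWalk
      rw [Walk.edges_copy, walkOfFun_edges]
      unfold List.Chain'
      rw [List.isChain_map, hm]
      refine (List.isChain_range_succ _ (2*m)).mpr ?_
      intro k hk
      have h1 := haltk k (by omega)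
      have h2 := haltk (k+1) (by omega)
      simp only [Nat.even_add_one] at h2
      tauto
    · intro e he
      rw [Walk.edges_copy, walkOfFun_edges, hm, List.range_succ_eq_map, List.map_cons] at he
      simp only [List.head?_cons, Option.some_inj] at he
      rw [← he]
      exact (haltk 0 (by omega)).mpr (Even.zero)


lemma factorizable_induce_iff (G : SimpleGraph V) (S : Set V) :
    Factorizable (G.induce S) ↔
    ∃ K : Set (Sym2 V), K ⊆ G.edgeSet ∧ (∀ e ∈ K, ∀ x ∈ e, x ∈ S) ∧
      (∀ w ∈ S, ∃! e, e ∈ K ∧ w ∈ e) := by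
  constructor
  · rintro ⟨N, hN1, hN2⟩
    refine ⟨Sym2.map Subtype.val '' N, ?_, ?_, ?_⟩
    · rintro e ⟨ee, hee, rfl⟩
      have hadj := hN1 hee
      induction ee using Sym2.ind with
      | _ a b =>
        rw [Sym2.map_pair_eq, SimpleGraph.mem_edgeSet]
        rw [SimpleGraph.mem_edgeSet] at hadj
        exact hadj
    · rintro e ⟨ee, hee, rfl⟩ x hx
      induction ee using Sym2.ind with
      | _ a b =>
        rw [Sym2.map_pair_eq, Sym2.mem_iff] at hx
        rcases hx with rfl | rfl
        · exact a.2
        · exact b.2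
    · intro w hw
      obtain ⟨ee, ⟨heeN, hwee⟩, huniq⟩ := hN2 ⟨w, hw⟩
      refine ⟨Sym2.map Subtype.val ee, ⟨⟨ee, heeN, rfl⟩, Sym2.mem_map.mpr ⟨⟨w, hw⟩, hwee, rfl⟩⟩, ?_⟩
      rintro e ⟨⟨ee', hee', rfl⟩, hwe⟩
      obtain ⟨a, ha, hav⟩ := Sym2.mem_map.mp hwe
      have haw : a = ⟨w, hw⟩ := Subtype.ext hav
      rw [huniq ee' ⟨hee', haw ▸ ha⟩]
  · rintro ⟨K, hK1, hK2, hK3⟩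
    refine ⟨{ee : Sym2 S | Sym2.map Subtype.val ee ∈ K}, ?_, ?_⟩
    · intro ee hee
      induction ee using Sym2.ind with
      | _ a b =>
        rw [Set.mem_setOf_eq, Sym2.map_pair_eq] at hee
        have := hK1 hee
        rw [SimpleGraph.mem_edgeSet] at this ⊢
        exact this
    · intro w
      obtain ⟨e, ⟨heK, hwe⟩, huniq⟩ := hK3 w.1 w.2
      have hlift : ∃ ee : Sym2 S, Sym2.map Subtype.val ee = e ∧ w ∈ ee := by
        clear huniq
        revert hwe
        revert heK
        induction e using Sym2.ind with
        | _ a b =>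
          intro heK hwe
          have ha : a ∈ S := hK2 _ heK a (Sym2.mem_iff.mpr (Or.inl rfl))
          have hb : b ∈ S := hK2 _ heK b (Sym2.mem_iff.mpr (Or.inr rfl))
          rcases Sym2.mem_iff.mp hwe with h | h
          · exact ⟨s(⟨a, ha⟩, ⟨b, hb⟩), by rw [Sym2.map_pair_eq],
              Sym2.mem_iff.mpr (Or.inl (Subtype.ext h))⟩
          · exact ⟨s(⟨a, ha⟩, ⟨b, hb⟩), by rw [Sym2.map_pair_eq],
              Sym2.mem_iff.mpr (Or.inr (Subtype.ext h))⟩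
      obtain ⟨ee, hmap, hwee⟩ := hlift
      refine ⟨ee, ⟨by rw [Set.mem_setOf_eq, hmap]; exact heK, hwee⟩, ?_⟩
      rintro ee' ⟨hee', hwee'⟩
      have h1 : Sym2.map Subtype.val ee' = e :=
        huniq _ ⟨hee', Sym2.mem_map.mpr ⟨w, hwee', rfl⟩⟩
      exact Sym2.map.injective Subtype.val_injective (by rw [h1, hmap])


lemma data_to_K {G : SimpleGraph V} {M : Set (Sym2 V)} (hM : IsPerfectMatchingSet G M)
    {u v : V} {m : ℕ} {f : ℕ → V} (hu : f 0 = u) (hv : f (2*m+1) = v)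
    (hinj : Set.InjOn f (Set.Iic (2*m+1)))
    (hadj : ∀ k, k < 2*m+1 → G.Adj (f k) (f (k+1)))
    (haltk : ∀ k, k < 2*m+1 → (s(f k, f (k+1)) ∈ M ↔ Even k)) :
    ∃ K : Set (Sym2 V), K ⊆ G.edgeSet ∧ (∀ e ∈ K, ∀ x ∈ e, x ∈ ({u, v}ᶜ : Set V)) ∧
      (∀ w ∈ ({u, v}ᶜ : Set V), ∃! e, e ∈ K ∧ w ∈ e) := by
  obtain ⟨hM1, hM2⟩ := hM
  have hMuniq : ∀ (w : V) (e1 e2 : Sym2 V), e1 ∈ M → w ∈ e1 → e2 ∈ M → w ∈ e2 → e1 = e2 :=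
    fun w e1 e2 h1 h2 h3 h4 => (hM2 w).unique ⟨h1, h2⟩ ⟨h3, h4⟩
  have hMe : ∀ k, k < 2*m+1 → Even k → s(f k, f (k+1)) ∈ M :=
    fun k hk he => (haltk k hk).mpr he
  have hfne : ∀ i j, i ≤ 2*m+1 → j ≤ 2*m+1 → i ≠ j → f i ≠ f j :=
    fun i j hi hj hij h => hij (hinj (Set.mem_Iic.mpr hi) (Set.mem_Iic.mpr hj) h)
  -- the unique M-edge at a path vertex is a path edge of even index
  have hMat : ∀ k, k ≤ 2*m+1 → ∀ e, e ∈ M → f k ∈ e →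
      ∃ j, j < 2*m+1 ∧ Even j ∧ (j = k ∨ j + 1 = k) ∧ e = s(f j, f (j+1)) := by
    intro k hk e he hfe
    rcases Nat.even_or_odd k with hke | hko
    · have hklt : k < 2*m+1 := by
        rw [Nat.even_iff] at hke; omega
      refine ⟨k, hklt, hke, Or.inl rfl, ?_⟩
      exact hMuniq (f k) e _ he hfe (hMe k hklt hke) (Sym2.mem_iff.mpr (Or.inl rfl))
    · have hk1 : 1 ≤ k := by rw [Nat.odd_iff] at hko; omega
      have hje : Even (k - 1) := by
        rw [Nat.odd_iff] at hko; rw [Nat.even_iff]; omega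
      have hjlt : k - 1 < 2*m+1 := by omega
      refine ⟨k - 1, hjlt, hje, Or.inr (by omega), ?_⟩
      refine hMuniq (f k) e _ he hfe (hMe (k-1) hjlt hje) ?_
      exact Sym2.mem_iff.mpr (Or.inr (congrArg f (by omega)))
  set EE : Set (Sym2 V) := {e | ∃ k, k < 2*m+1 ∧ Even k ∧ e = s(f k, f (k+1))} with hEE
  set PP : Set (Sym2 V) := {e | ∃ k, k < 2*m+1 ∧ Odd k ∧ e = s(f k, f (k+1))} with hPP
  refine ⟨(M \ EE) ∪ PP, ?_, ?_, ?_⟩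
  · rintro e (⟨heM, -⟩ | ⟨k, hk, -, rfl⟩)
    · exact hM1 heM
    · exact (hadj k hk)
  · rintro e (⟨heM, heE⟩ | ⟨k, hk, hkodd, rfl⟩) x hx
    · simp only [Set.mem_compl_iff, Set.mem_insert_iff, Set.mem_singleton_iff]
      push_neg
      constructor
      · rintro rfl
        obtain ⟨j, hj, hje, hjk, rfl⟩ := hMat 0 (by omega) e heM (hu ▸ hx)
        exact heE ⟨j, hj, hje, rfl⟩
      · rintro rfl
        obtain ⟨j, hj, hje, hjk, rfl⟩ := hMat (2*m+1) (le_refl _) e heM (hv ▸ hx)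
        exact heE ⟨j, hj, hje, rfl⟩
    · rw [Nat.odd_iff] at hkodd
      rcases Sym2.mem_iff.mp hx with rfl | rfl
      · simp only [Set.mem_compl_iff, Set.mem_insert_iff, Set.mem_singleton_iff]
        push_neg
        exact ⟨hu ▸ hfne k 0 (by omega) (by omega) (by omega),
          hv ▸ hfne k (2*m+1) (by omega) (by omega) (by omega)⟩
      · simp only [Set.mem_compl_iff, Set.mem_insert_iff, Set.mem_singleton_iff]
        push_neg
        exact ⟨hu ▸ hfne (k+1) 0 (by omega) (by omega) (by omega),
          hv ▸ hfne (k+1) (2*m+1) (by omega) (by omega) (by omega)⟩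
  · intro w hw
    simp only [Set.mem_compl_iff, Set.mem_insert_iff, Set.mem_singleton_iff] at hw
    push_neg at hw
    obtain ⟨hwu, hwv⟩ := hw
    by_cases hpath : ∃ k, k ≤ 2*m+1 ∧ f k = w
    · obtain ⟨k, hk, rfl⟩ := hpath
      have hk0 : k ≠ 0 := fun h => hwu (h ▸ hu ▸ rfl)
      have hkn : k ≠ 2*m+1 := fun h => hwv (h ▸ hv ▸ rfl)
      -- uniqueness against M \ EE is impossible
      have hnotME : ∀ e, e ∈ M \ EE → f k ∈ e → False := by
        rintro e ⟨heM, heE⟩ hmem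
        obtain ⟨j, hj, hje, -, rfl⟩ := hMat k hk e heM hmem
        exact heE ⟨j, hj, hje, rfl⟩
      rcases Nat.even_or_odd k with hke | hko
      · -- k even, the PP edge is s(f (k-1), f k)
        rw [Nat.even_iff] at hke
        have hjodd : Odd (k - 1) := by rw [Nat.odd_iff]; omega
        have hjlt : k - 1 < 2*m+1 := by omega
        refine ⟨s(f (k-1), f (k-1+1)), ⟨Or.inr ⟨k-1, hjlt, hjodd, rfl⟩,
          Sym2.mem_iff.mpr (Or.inr (congrArg f (by omega)))⟩, ?_⟩
        rintro e ⟨(heME | ⟨j, hj, hjo, rfl⟩), hmem⟩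
        · exact absurd hmem (fun h => hnotME e heME h)
        · rw [Nat.odd_iff] at hjo
          rcases Sym2.mem_iff.mp hmem with h | h
          · exact absurd (hinj (Set.mem_Iic.mpr hk) (Set.mem_Iic.mpr (by omega)) h)
              (by omega)
          · have : k = j + 1 := hinj (Set.mem_Iic.mpr hk) (Set.mem_Iic.mpr (by omega)) h
            have : j = k - 1 := by omega
            subst this
            rfl
      · -- k odd, the PP edge is s(f k, f (k+1))
        rw [Nat.odd_iff] at hko
        have hklt : k < 2*m+1 := by omega
        refine ⟨s(f k, f (k+1)), ⟨Or.inr ⟨k, hklt, Nat.odd_iff.mpr hko, rfl⟩,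
          Sym2.mem_iff.mpr (Or.inl rfl)⟩, ?_⟩
        rintro e ⟨(heME | ⟨j, hj, hjo, rfl⟩), hmem⟩
        · exact absurd hmem (fun h => hnotME e heME h)
        · rw [Nat.odd_iff] at hjo
          rcases Sym2.mem_iff.mp hmem with h | h
          · have : k = j := hinj (Set.mem_Iic.mpr hk) (Set.mem_Iic.mpr (by omega)) h
            subst this
            rfl
          · exact absurd (hinj (Set.mem_Iic.mpr hk) (Set.mem_Iic.mpr (by omega)) h)
              (by omega)
    · push_neg at hpath
      obtain ⟨e0, ⟨he0M, hwe0⟩, huniq0⟩ := hM2 w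
      have hoffEE : ∀ e, e ∈ EE ∨ e ∈ PP → w ∉ e := by
        rintro e (⟨j, hj, -, rfl⟩ | ⟨j, hj, -, rfl⟩) hmem <;>
        · rcases Sym2.mem_iff.mp hmem with h | h
          · exact hpath j (by omega) h.symm
          · exact hpath (j+1) (by omega) h.symm
      refine ⟨e0, ⟨Or.inl ⟨he0M, fun hE => hoffEE e0 (Or.inl hE) hwe0⟩, hwe0⟩, ?_⟩
      rintro e ⟨(⟨heM, -⟩ | hP), hmem⟩
      · exact huniq0 e ⟨heM, hmem⟩
      · exact absurd hmem (hoffEE e (Or.inr hP))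


open Classical in
/-- The partner of `w` in the edge set `K` (junk value `w` if no edge of `K` contains `w`). -/
noncomputable def pr (K : Set (Sym2 V)) (w : V) : V :=
  if h : ∃ e, e ∈ K ∧ w ∈ e then Sym2.Mem.other h.choose_spec.2 else w

lemma pr_mem {K : Set (Sym2 V)} {w : V} (h : ∃ e, e ∈ K ∧ w ∈ e) : s(w, pr K w) ∈ K := by
  unfold pr
  rw [dif_pos h, Sym2.other_spec h.choose_spec.2]
  exact h.choose_spec.1

lemma pr_eq_of_not {K : Set (Sym2 V)} {w : V} (h : ¬ ∃ e, e ∈ K ∧ w ∈ e) : pr K w = w := by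
  unfold pr
  rw [dif_neg h]

lemma pr_unique {K : Set (Sym2 V)} {w x : V} (hstar : ∃! e, e ∈ K ∧ w ∈ e)
    (hx : s(w, x) ∈ K) : x = pr K w := by
  have h1 := pr_mem (K := K) (w := w) hstar.exists
  have h2 := hstar.unique ⟨hx, Sym2.mem_mk_left w x⟩ ⟨h1, Sym2.mem_mk_left w _⟩
  exact Sym2.congr_right.mp h2

lemma K_to_data [Finite V] {G : SimpleGraph V} {M : Set (Sym2 V)}
    (hM : IsPerfectMatchingSet G M) {u v : V} (hne : u ≠ v)
    {K : Set (Sym2 V)} (hK1 : K ⊆ G.edgeSet)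
    (hK2 : ∀ e ∈ K, ∀ x ∈ e, x ∈ ({u, v}ᶜ : Set V))
    (hK3 : ∀ w ∈ ({u, v}ᶜ : Set V), ∃! e, e ∈ K ∧ w ∈ e) :
    ∃ n : ℕ, ∃ f : ℕ → V, Odd n ∧ f 0 = u ∧ f n = v ∧ Set.InjOn f (Set.Iic n) ∧
      (∀ k, k < n → G.Adj (f k) (f (k+1))) ∧
      (∀ k, k < n → (s(f k, f (k+1)) ∈ M ↔ Even k)) := by
  classical
  obtain ⟨hM1, hM2⟩ := hM
  have hmemS : ∀ x : V, x ∈ ({u, v}ᶜ : Set V) ↔ x ≠ u ∧ x ≠ v := by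
    intro x
    simp [Set.mem_compl_iff, Set.mem_insert_iff, not_or]
  have hK2' : ∀ e ∈ K, ∀ x ∈ e, x ≠ u ∧ x ≠ v :=
    fun e he x hx => (hmemS x).mp (hK2 e he x hx)
  have hK3' : ∀ w, w ≠ u → w ≠ v → ∃! e, e ∈ K ∧ w ∈ e :=
    fun w h1 h2 => hK3 w ((hmemS w).mpr ⟨h1, h2⟩)
  set mm := pr M with hmmdef
  set mk := pr K with hmkdef
  have hmmM : ∀ w, s(w, mm w) ∈ M := fun w => pr_mem (hM2 w).exists
  have hmmU : ∀ w x, s(w, x) ∈ M → x = mm w := fun w x hx => pr_unique (hM2 w) hx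
  have hmmInv : ∀ w, mm (mm w) = w :=
    fun w => (hmmU (mm w) w (Sym2.eq_swap ▸ hmmM w)).symm
  have hmmNe : ∀ w, mm w ≠ w := by
    intro w h
    have h2 := hM1 (hmmM w)
    rw [h, SimpleGraph.mem_edgeSet] at h2
    exact G.irrefl h2
  have hmmInj : ∀ x y, mm x = mm y → x = y := by
    intro x y h
    rw [← hmmInv x, h, hmmInv]
  have hmkK : ∀ w, w ≠ u → w ≠ v → s(w, mk w) ∈ K :=
    fun w h1 h2 => pr_mem (hK3' w h1 h2).exists
  have hmkU : ∀ w, w ≠ u → w ≠ v → ∀ x, s(w, x) ∈ K → x = mk w :=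
    fun w h1 h2 x hx => pr_unique (hK3' w h1 h2) hx
  have hmkS : ∀ w, w ≠ u → w ≠ v → mk w ≠ u ∧ mk w ≠ v :=
    fun w h1 h2 => hK2' _ (hmkK w h1 h2) (mk w) (Sym2.mem_mk_right w _)
  have hmkNe : ∀ w, w ≠ u → w ≠ v → mk w ≠ w := by
    intro w h1 h2 h
    have h3 := hK1 (hmkK w h1 h2)
    rw [h, SimpleGraph.mem_edgeSet] at h3
    exact G.irrefl h3
  have hmkId : ∀ w, ¬(w ≠ u ∧ w ≠ v) → mk w = w := by
    intro w h
    apply pr_eq_of_not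
    rintro ⟨e, heK, hwe⟩
    exact h (hK2' e heK w hwe)
  have hmkInv : ∀ w, mk (mk w) = w := by
    intro w
    by_cases h1 : w ≠ u ∧ w ≠ v
    · have hs := hmkS w h1.1 h1.2
      exact (hmkU (mk w) hs.1 hs.2 w (Sym2.eq_swap ▸ hmkK w h1.1 h1.2)).symm
    · rw [hmkId w h1, hmkId w h1]
  have hmkInj : ∀ x y, mk x = mk y → x = y := by
    intro x y h
    rw [← hmkInv x, h, hmkInv]
  -- the alternating sequence
  set a : ℕ → V := fun n => Nat.rec u (fun k ih => if Even k then mm ih else mk ih) n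
    with hadef
  have ha0 : a 0 = u := rfl
  have haS : ∀ k, a (k+1) = if Even k then mm (a k) else mk (a k) := fun k => rfl
  have hnotE : ∀ {k : ℕ}, Odd k → ¬ Even k := by
    intro k h1 h2
    rw [Nat.odd_iff] at h1
    rw [Nat.even_iff] at h2
    omega
  -- injectivity before hitting v
  have key : ∀ j, (∀ k, 1 ≤ k → k ≤ j → a k ≠ v) → ∀ i, i < j → a i ≠ a j := by
    intro j
    induction j using Nat.strong_induction_on with
    | _ j IH =>
      intro hvv i hij heq
      match j, hij with
      | j'+1, hij =>
        have hij' : i < j' + 1 := hij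
        have hstep := haS j'
        rcases Nat.even_or_odd j' with hje | hjo
        · rw [if_pos hje] at hstep
          rcases Nat.even_or_odd i with hie | hio
          · have h1 : a (i+1) = mm (a i) := by rw [haS i, if_pos hie]
            have h2 : a (i+1) = a j' := by rw [h1, heq, hstep, hmmInv]
            rcases lt_trichotomy (i+1) j' with h | h | h
            · exact IH j' (by omega) (fun k hk1 hk2 => hvv k hk1 (by omega)) (i+1) h h2
            · rw [Nat.even_iff] at hje hie; omega
            · have hi : i = j' := by omega
              subst hi
              rw [hstep] at heq
              exact hmmNe (a i) heq.symm
          · have hi1 : 1 ≤ i := by rw [Nat.odd_iff] at hio; omega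
            have hie' : Even (i - 1) := by
              rw [Nat.odd_iff] at hio; rw [Nat.even_iff]; omega
            have h1 : a i = mm (a (i-1)) := by
              have h := haS (i-1)
              rw [if_pos hie'] at h
              have hieq' : i - 1 + 1 = i := by omega
              rw [hieq'] at h
              exact h
            have h2 : a (i-1) = a j' := hmmInj _ _ (by rw [← h1, heq, hstep])
            have hij2 : i ≠ j' := by
              rw [Nat.odd_iff] at hio; rw [Nat.even_iff] at hje; omega
            exact IH j' (by omega) (fun k hk1 hk2 => hvv k hk1 (by omega)) (i-1) (by omega) h2
        · rw [if_neg (hnotE hjo)] at hstep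
          have hj'1 : 1 ≤ j' := by rw [Nat.odd_iff] at hjo; omega
          have hjv : a j' ≠ v := hvv j' hj'1 (by omega)
          have hju : a j' ≠ u := by
            intro h
            exact IH j' (by omega) (fun k hk1 hk2 => hvv k hk1 (by omega)) 0 (by omega)
              (by rw [ha0, h])
          have hjS := hmkS (a j') hju hjv
          rcases Nat.even_or_odd i with hie | hio
          · rcases Nat.eq_zero_or_pos i with rfl | hi0
            · rw [ha0] at heq
              exact hjS.1 (by rw [← hstep, ← heq])
            · have hi1od : Odd (i-1) := by
                rw [Nat.even_iff] at hie; rw [Nat.odd_iff]; omega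
              have h1 : a i = mk (a (i-1)) := by
                have h := haS (i-1)
                rw [if_neg (hnotE hi1od)] at h
                have hieq' : i - 1 + 1 = i := by omega
                rw [hieq'] at h
                exact h
              have h2 : a (i-1) = a j' := hmkInj _ _ (by rw [← h1, heq, hstep])
              have hij2 : i ≠ j' := by
                rw [Nat.even_iff] at hie; rw [Nat.odd_iff] at hjo; omega
              exact IH j' (by omega) (fun k hk1 hk2 => hvv k hk1 (by omega)) (i-1) (by omega) h2
          · have h1 : a (i+1) = mk (a i) := by rw [haS i, if_neg (hnotE hio)]
            have h2 : a (i+1) = a j' := by rw [h1, heq, hstep, hmkInv]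
            rcases lt_trichotomy (i+1) j' with h | h | h
            · exact IH j' (by omega) (fun k hk1 hk2 => hvv k hk1 (by omega)) (i+1) h h2
            · rw [Nat.odd_iff] at hjo hio; omega
            · have hi : i = j' := by omega
              subst hi
              rw [hstep] at heq
              exact hmkNe (a i) hju hjv heq.symm
  -- the sequence must hit v
  have hexists : ∃ jj, 1 ≤ jj ∧ a jj = v := by
    by_contra hcon
    push_neg at hcon
    have hainj : Function.Injective a := by
      intro i j h
      rcases lt_trichotomy i j with hl | he | hl
      · exact absurd h (key j (fun k hk1 _ => hcon k hk1) i hl)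
      · exact he
      · exact absurd h.symm (key i (fun k hk1 _ => hcon k hk1) j hl)
    obtain ⟨i, j, hij, he⟩ := Finite.exists_ne_map_eq_of_infinite a
    exact hij (hainj he)
  set n := Nat.find hexists with hndef
  have hn := Nat.find_spec hexists
  have hvlt : ∀ k, 1 ≤ k → k < n → a k ≠ v :=
    fun k h1 h2 he => (Nat.find_min hexists h2) ⟨h1, he⟩
  have hne2 : ∀ i j, i < j → j ≤ n → a i ≠ a j := by
    intro i j hij hj
    rcases Nat.lt_or_ge j n with hl | hg
    · exact key j (fun k hk1 hk2 => hvlt k hk1 (by omega)) i hij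
    · have hjn : j = n := by omega
      subst hjn
      intro h
      have hav : a i = v := by rw [h, hn.2]
      rcases Nat.eq_zero_or_pos i with rfl | h0
      · exact hne (by rw [← ha0, hav])
      · exact hvlt i h0 hij hav
  have hnodd : Odd n := by
    rcases Nat.even_or_odd n with hnev | h
    · exfalso
      obtain ⟨hn1, hnv⟩ := hn
      have hj' : Odd (n-1) := by
        rw [Nat.even_iff] at hnev; rw [Nat.odd_iff]; omega
      have hstep : a n = mk (a (n-1)) := by
        have h := haS (n-1)
        rw [if_neg (hnotE hj')] at h
        have hieq' : n - 1 + 1 = n := by omega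
        rw [hieq'] at h
        exact h
      have h1v : a (n-1) ≠ v := hvlt (n-1) (by rw [Nat.odd_iff] at hj'; omega) (by omega)
      have h1u : a (n-1) ≠ u := by
        intro h
        exact hne2 0 (n-1) (by rw [Nat.odd_iff] at hj'; omega) (by omega) (by rw [ha0, h])
      exact (hmkS _ h1u h1v).2 (by rw [← hstep, hnv])
    · exact h
  refine ⟨n, a, hnodd, ha0, hn.2, ?_, ?_, ?_⟩
  · intro i hi j hj h
    simp only [Set.mem_Iic] at hi hj
    by_contra hij
    rcases lt_trichotomy i j with hl | he | hl
    · exact hne2 i j hl hj h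
    · exact hij he
    · exact hne2 j i hl hi h.symm
  · intro k hk
    rcases Nat.even_or_odd k with hke | hko
    · have h1 : a (k+1) = mm (a k) := by rw [haS k, if_pos hke]
      rw [h1, ← SimpleGraph.mem_edgeSet]
      exact hM1 (hmmM (a k))
    · have hk1 : 1 ≤ k := by rw [Nat.odd_iff] at hko; omega
      have hak_u : a k ≠ u := fun h => hne2 0 k hk1 (by omega) (by rw [ha0, h])
      have hak_v : a k ≠ v := hvlt k hk1 hk
      have h1 : a (k+1) = mk (a k) := by rw [haS k, if_neg (hnotE hko)]
      rw [h1, ← SimpleGraph.mem_edgeSet]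
      exact hK1 (hmkK (a k) hak_u hak_v)
  · intro k hk
    rcases Nat.even_or_odd k with hke | hko
    · refine iff_of_true ?_ hke
      have h1 : a (k+1) = mm (a k) := by rw [haS k, if_pos hke]
      rw [h1]
      exact hmmM (a k)
    · refine iff_of_false ?_ (hnotE hko)
      intro hmem
      have hk1 : 1 ≤ k := by rw [Nat.odd_iff] at hko; omega
      have hke' : Even (k - 1) := by
        rw [Nat.odd_iff] at hko; rw [Nat.even_iff]; omega
      have h1 : a k = mm (a (k-1)) := by
        have h := haS (k-1)
        rw [if_pos hke'] at h
        have hieq' : k - 1 + 1 = k := by omega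
        rw [hieq'] at h
        exact h
      have h2 : a (k+1) = mm (a k) := hmmU (a k) (a (k+1)) hmem
      have h3 : a (k+1) = a (k-1) := by rw [h2, h1, hmmInv]
      exact hne2 (k-1) (k+1) (by omega) (by omega) h3.symm


end Aux

theorem stmt7 [Finite V] (G : SimpleGraph V) (M : Set (Sym2 V))
    (hM : IsPerfectMatchingSet G M) (u v : V) (hne : u ≠ v) (hfc : SameFC G u v) :
    Factorizable (G.induce ({u, v}ᶜ : Set V)) ↔
      ∃ p : G.Walk u v, IsSaturatedPath M p := by
  rw [factorizable_induce_iff, satPath_iff_data]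
  constructor
  · rintro ⟨K, hK1, hK2, hK3⟩
    exact K_to_data hM hne hK1 hK2 hK3
  · rintro ⟨n, f, hodd, hu, hv', hinj, hadj, haltk⟩
    obtain ⟨m, hm⟩ := hodd
    subst hm
    exact data_to_K hM hu hv' hinj hadj haltk
end
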